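/- arXiv:1503.01155 — 3 statements merged into one kernel-verified Lean document; each statement's English description precedes it below -/
import Mathlib

section
/- Consider the two-locus, two-allele recombination ODE on ℝ⁴: ṗ₁ = ṗ₄ = k(p₂p₃ − p₁p₄) and ṗ₂ = ṗ₃ = k(p₁p₄ − p₂p₃), with k > 0. Every differentiable solution p : [0,∞) → ℝ⁴_{≥0} converges, as t → ∞, to a point q ∈ ℝ⁴_{≥0} satisfying q₁q₄ = q₂q₃ (a detailed-balancing equilibrium); moreover q is the unique point of ℝ⁴_{≥0} with q₁q₄ = q₂q₃ that satisfies the conservation relations q₁+q₂ = p₁(0)+p₂(0), q₁+q₃ = p₁(0)+p₃(0), and q₁+q₂+q₃+q₄ = p₁(0)+p₂(0)+p₃(0)+p₄(0), provided this total sum is positive. -/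
open Filter

/-- A function with zero derivative on `[0, ∞)` is constant there. -/
lemma const_on_nonneg_of_deriv_zero (f : ℝ → ℝ)
    (hf : ∀ t, 0 ≤ t → HasDerivAt f 0 t) : ∀ t, 0 ≤ t → f t = f 0 := by
  intro t ht
  have h := constant_of_has_deriv_right_zero (f := f) (a := 0) (b := t)
    (fun x hx => (hf x hx.1).continuousAt.continuousWithinAt)
    (fun x hx => (hf x hx.1).hasDerivWithinAt)
  exact h t ⟨ht, le_refl t⟩

/-- **Two-locus, two-allele recombination: global convergence to a detailed-balancing
equilibrium.** Every differentiable nonnegative solution of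
`ṗ₁ = ṗ₄ = k(p₂p₃ − p₁p₄)`, `ṗ₂ = ṗ₃ = k(p₁p₄ − p₂p₃)` with `k > 0` converges as `t → ∞`
to a point `q ∈ ℝ⁴₊` with `q₁q₄ = q₂q₃`; moreover, provided the (conserved) total sum is
positive, `q` is the unique nonnegative point with `q₁q₄ = q₂q₃` satisfying the conservation
relations `q₁+q₂ = p₁(0)+p₂(0)`, `q₁+q₃ = p₁(0)+p₃(0)`, and
`q₁+q₂+q₃+q₄ = p₁(0)+p₂(0)+p₃(0)+p₄(0)`. -/
theorem convergence_two_locus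
    (k : ℝ) (hk : 0 < k) (p₁ p₂ p₃ p₄ : ℝ → ℝ)
    (hnn : ∀ t, 0 ≤ t → 0 ≤ p₁ t ∧ 0 ≤ p₂ t ∧ 0 ≤ p₃ t ∧ 0 ≤ p₄ t)
    (h₁ : ∀ t, 0 ≤ t → HasDerivAt p₁ (k * (p₂ t * p₃ t - p₁ t * p₄ t)) t)
    (h₄ : ∀ t, 0 ≤ t → HasDerivAt p₄ (k * (p₂ t * p₃ t - p₁ t * p₄ t)) t)
    (h₂ : ∀ t, 0 ≤ t → HasDerivAt p₂ (k * (p₁ t * p₄ t - p₂ t * p₃ t)) t)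
    (h₃ : ∀ t, 0 ≤ t → HasDerivAt p₃ (k * (p₁ t * p₄ t - p₂ t * p₃ t)) t) :
    ∃ q₁ q₂ q₃ q₄ : ℝ,
      (0 ≤ q₁ ∧ 0 ≤ q₂ ∧ 0 ≤ q₃ ∧ 0 ≤ q₄) ∧
      q₁ * q₄ = q₂ * q₃ ∧
      Tendsto p₁ atTop (nhds q₁) ∧ Tendsto p₂ atTop (nhds q₂) ∧
      Tendsto p₃ atTop (nhds q₃) ∧ Tendsto p₄ atTop (nhds q₄) ∧
      (0 < p₁ 0 + p₂ 0 + p₃ 0 + p₄ 0 →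
        (q₁ + q₂ = p₁ 0 + p₂ 0 ∧ q₁ + q₃ = p₁ 0 + p₃ 0 ∧
          q₁ + q₂ + q₃ + q₄ = p₁ 0 + p₂ 0 + p₃ 0 + p₄ 0) ∧
        ∀ r₁ r₂ r₃ r₄ : ℝ, 0 ≤ r₁ → 0 ≤ r₂ → 0 ≤ r₃ → 0 ≤ r₄ →
          r₁ * r₄ = r₂ * r₃ →
          r₁ + r₂ = p₁ 0 + p₂ 0 → r₁ + r₃ = p₁ 0 + p₃ 0 →
          r₁ + r₂ + r₃ + r₄ = p₁ 0 + p₂ 0 + p₃ 0 + p₄ 0 →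
          r₁ = q₁ ∧ r₂ = q₂ ∧ r₃ = q₃ ∧ r₄ = q₄) := by
  set a : ℝ := p₁ 0 + p₂ 0 with ha_def
  set b : ℝ := p₁ 0 + p₃ 0 with hb_def
  set s : ℝ := p₁ 0 + p₂ 0 + p₃ 0 + p₄ 0 with hs_def
  -- conservation laws
  have hcons_a : ∀ t, 0 ≤ t → p₁ t + p₂ t = a := by
    intro t ht
    exact const_on_nonneg_of_deriv_zero (fun u => p₁ u + p₂ u)
      (fun u hu => by
        have H := (h₁ u hu).add (h₂ u hu)
        refine H.congr_deriv (Eq.symm ?_); ring) t ht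
  have hcons_b : ∀ t, 0 ≤ t → p₁ t + p₃ t = b := by
    intro t ht
    exact const_on_nonneg_of_deriv_zero (fun u => p₁ u + p₃ u)
      (fun u hu => by
        have H := (h₁ u hu).add (h₃ u hu)
        refine H.congr_deriv (Eq.symm ?_); ring) t ht
  have hcons_s : ∀ t, 0 ≤ t → p₁ t + p₂ t + p₃ t + p₄ t = s := by
    intro t ht
    exact const_on_nonneg_of_deriv_zero (fun u => p₁ u + p₂ u + p₃ u + p₄ u)
      (fun u hu => by
        have H := (((h₁ u hu).add (h₂ u hu)).add (h₃ u hu)).add (h₄ u hu)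
        refine H.congr_deriv (Eq.symm ?_); ring) t ht
  have hp2 : ∀ t, 0 ≤ t → p₂ t = a - p₁ t := fun t ht => by linarith [hcons_a t ht]
  have hp3 : ∀ t, 0 ≤ t → p₃ t = b - p₁ t := fun t ht => by linarith [hcons_b t ht]
  have hp4 : ∀ t, 0 ≤ t → p₄ t = s - a - b + p₁ t := fun t ht => by
    linarith [hcons_s t ht, hcons_a t ht, hcons_b t ht]
  have hs_nonneg : 0 ≤ s := by
    obtain ⟨n1, n2, n3, n4⟩ := hnn 0 le_rfl
    simp only [hs_def]; linarith
  rcases eq_or_lt_of_le hs_nonneg with hs0 | hs_pos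
  · -- total mass zero: everything is identically zero on [0,∞)
    have hz : ∀ t, 0 ≤ t → p₁ t = 0 ∧ p₂ t = 0 ∧ p₃ t = 0 ∧ p₄ t = 0 := by
      intro t ht
      obtain ⟨n1, n2, n3, n4⟩ := hnn t ht
      have := hcons_s t ht
      refine ⟨by linarith, by linarith, by linarith, by linarith⟩
    have hev : ∀ᶠ t : ℝ in atTop, 0 ≤ t := eventually_ge_atTop 0
    refine ⟨0, 0, 0, 0, ⟨le_rfl, le_rfl, le_rfl, le_rfl⟩, by ring, ?_, ?_, ?_, ?_, ?_⟩
    · exact Tendsto.congr' (hev.mono fun t ht => ((hz t ht).1).symm) tendsto_const_nhds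
    · exact Tendsto.congr' (hev.mono fun t ht => ((hz t ht).2.1).symm) tendsto_const_nhds
    · exact Tendsto.congr' (hev.mono fun t ht => ((hz t ht).2.2.1).symm) tendsto_const_nhds
    · exact Tendsto.congr' (hev.mono fun t ht => ((hz t ht).2.2.2).symm) tendsto_const_nhds
    · intro hpos
      exact absurd hpos (by rw [← hs0]; exact lt_irrefl 0)
  · -- positive total mass
    have hs_ne : s ≠ 0 := ne_of_gt hs_pos
    set L : ℝ := a * b / s with hL_def
    have hL : s * L = a * b := by
      rw [hL_def]; field_simp
    -- the reduced linear ODE for p₁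
    have hODE : ∀ t, 0 ≤ t → HasDerivAt p₁ (k * (a * b - s * p₁ t)) t := by
      intro t ht
      have H := h₁ t ht
      have e : k * (p₂ t * p₃ t - p₁ t * p₄ t) = k * (a * b - s * p₁ t) := by
        rw [hp2 t ht, hp3 t ht, hp4 t ht]; ring
      rwa [e] at H
    -- explicit solution via integrating factor
    have key : ∀ t, 0 ≤ t → (p₁ t - L) * Real.exp (k * s * t) = p₁ 0 - L := by
      have := const_on_nonneg_of_deriv_zero
        (fun u => (p₁ u - L) * Real.exp (k * s * u))
        (fun u hu => by
          have he : HasDerivAt (fun u => Real.exp (k * s * u))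
              (Real.exp (k * s * u) * (k * s)) u := by
            simpa using ((hasDerivAt_id u).const_mul (k * s)).exp
          have H := ((hODE u hu).sub_const L).mul he
          refine H.congr_deriv (Eq.symm ?_)
          linear_combination (k * Real.exp (k * s * u)) * hL)
      intro t ht
      simpa using this t ht
    have hexp_ne : ∀ t : ℝ, Real.exp (k * s * t) ≠ 0 := fun t => (Real.exp_pos _).ne'
    have hsol : ∀ t, 0 ≤ t → p₁ t = L + (p₁ 0 - L) * Real.exp (-(k * s * t)) := by
      intro t ht
      have := key t ht
      rw [Real.exp_neg]
      field_simp at this ⊢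
      linarith [this]
    -- convergence of p₁
    have hks : 0 < k * s := mul_pos hk hs_pos
    have hexp_to_zero : Tendsto (fun t : ℝ => Real.exp (-(k * s * t))) atTop (nhds 0) := by
      apply Real.tendsto_exp_atBot.comp
      exact tendsto_neg_atBot_iff.mpr (Tendsto.const_mul_atTop hks tendsto_id)
    have htend₁ : Tendsto p₁ atTop (nhds L) := by
      have h0 : Tendsto (fun t : ℝ => L + (p₁ 0 - L) * Real.exp (-(k * s * t))) atTop
          (nhds (L + (p₁ 0 - L) * 0)) :=
        tendsto_const_nhds.add (tendsto_const_nhds.mul hexp_to_zero)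
      rw [mul_zero, add_zero] at h0
      exact Tendsto.congr' ((eventually_ge_atTop 0).mono fun t ht => (hsol t ht).symm) h0
    have hev : ∀ᶠ t : ℝ in atTop, 0 ≤ t := eventually_ge_atTop 0
    have htend₂ : Tendsto p₂ atTop (nhds (a - L)) :=
      Tendsto.congr' (hev.mono fun t ht => (hp2 t ht).symm) (tendsto_const_nhds.sub htend₁)
    have htend₃ : Tendsto p₃ atTop (nhds (b - L)) :=
      Tendsto.congr' (hev.mono fun t ht => (hp3 t ht).symm) (tendsto_const_nhds.sub htend₁)
    have htend₄ : Tendsto p₄ atTop (nhds (s - a - b + L)) :=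
      Tendsto.congr' (hev.mono fun t ht => (hp4 t ht).symm)
        (Tendsto.add tendsto_const_nhds htend₁)
    -- nonnegativity of the limit
    obtain ⟨n1, n2, n3, n4⟩ := hnn 0 le_rfl
    have ha_nn : 0 ≤ a := by rw [ha_def]; linarith
    have hb_nn : 0 ≤ b := by rw [hb_def]; linarith
    have hsb : 0 ≤ s - b := by simp only [hs_def, hb_def]; linarith
    have hsa : 0 ≤ s - a := by simp only [hs_def, ha_def]; linarith
    have hq1 : 0 ≤ L := div_nonneg (mul_nonneg ha_nn hb_nn) hs_nonneg
    have hq2 : 0 ≤ a - L := by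
      have : a - L = a * (s - b) / s := by rw [hL_def]; field_simp
      rw [this]; exact div_nonneg (mul_nonneg ha_nn hsb) hs_nonneg
    have hq3 : 0 ≤ b - L := by
      have : b - L = b * (s - a) / s := by rw [hL_def]; field_simp
      rw [this]; exact div_nonneg (mul_nonneg hb_nn hsa) hs_nonneg
    have hq4 : 0 ≤ s - a - b + L := by
      have : s - a - b + L = (s - a) * (s - b) / s := by
        rw [hL_def]; field_simp; ring
      rw [this]; exact div_nonneg (mul_nonneg hsa hsb) hs_nonneg
    refine ⟨L, a - L, b - L, s - a - b + L, ⟨hq1, hq2, hq3, hq4⟩, ?_,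
      htend₁, htend₂, htend₃, htend₄, ?_⟩
    · linear_combination hL
    · intro _hpos
      refine ⟨⟨by ring, by ring, by simp only [hs_def]; ring⟩, ?_⟩
      intro r₁ r₂ r₃ r₄ _ _ _ _ hdb hr12 hr13 hrs
      have e2 : r₂ = a - r₁ := by linarith
      have e3 : r₃ = b - r₁ := by linarith
      have e4 : r₄ = s - a - b + r₁ := by linarith
      rw [e2, e3, e4] at hdb
      have hr1s : r₁ * s = a * b := by nlinarith [hdb]
      have hr1 : r₁ = L := by
        rw [hL_def, eq_div_iff hs_ne]; linarith
      exact ⟨hr1, by rw [e2, hr1], by rw [e3, hr1], by rw [e4, hr1]⟩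
end

section
/- Under the standing assumption, a point p ∈ ℝ^𝓖_{≥0} with σ := Σ_{g ∈ 𝓖} p(g) > 0 is an equilibrium of the recombination dynamics (i.e., F(p) = 0) if and only if p(g) = σ^{1−L} ∏_{i ∈ 𝓛} pᵢ(gᵢ) for all g ∈ 𝓖. -/
open Finset

/-- Recombination of gametes `g` and `h` following pattern `{I, Iᶜ}`:
`(g_I h_J)ᵢ = gᵢ` for `i ∈ I` and `= hᵢ` for `i ∈ J = Iᶜ`. -/
def recomb {L : Type} [DecidableEq L] {A : L → Type} (I : Finset L)
    (g h : ∀ i, A i) : ∀ i, A i :=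
  fun i => if i ∈ I then g i else h i

/-- The recombination vector field
`F(p) = (1/2) Σ_{g,h} Σ_{{I,J} ∈ 𝓟} c({I,J}) p(g) p(h) (g_I h_J + g_J h_I − g − h)`,
where the sum over unordered patterns `{I,J}` is written as `(1/2) Σ_{I : Finset L}`
(every unordered pattern `{I, Iᶜ}` corresponds to exactly two subsets `I` and `Iᶜ`;
the rate constants satisfy `c I = c Iᶜ`). -/
noncomputable def recF {L : Type} [Fintype L] [DecidableEq L] {A : L → Type}
    [∀ i, Fintype (A i)] [∀ i, DecidableEq (A i)]
    (c : Finset L → ℝ) (p : (∀ i, A i) → ℝ) : (∀ i, A i) → ℝ :=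
  fun x => (1 / 4) * ∑ g : ∀ i, A i, ∑ h : ∀ i, A i, ∑ I : Finset L,
    c I * p g * p h *
      ((if x = recomb I g h then 1 else 0) + (if x = recomb Iᶜ g h then 1 else 0)
        - (if x = g then 1 else 0) - (if x = h then 1 else 0))

/-- The marginal frequency `pᵢ(a) = Σ_{g : gᵢ = a} p(g)`. -/
noncomputable def marg {L : Type} [Fintype L] [DecidableEq L] {A : L → Type}
    [∀ i, Fintype (A i)] [∀ i, DecidableEq (A i)]
    (p : (∀ i, A i) → ℝ) (i : L) (a : A i) : ℝ :=
  ∑ g : ∀ j, A j, if g i = a then p g else 0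

set_option linter.unusedSectionVars false
set_option maxHeartbeats 1000000

lemma sum_sum_sum_comm {α β γ : Type*} [Fintype α] [Fintype β] [Fintype γ]
    (F : α → β → γ → ℝ) :
    ∑ a : α, ∑ b : β, ∑ c : γ, F a b c = ∑ c : γ, ∑ a : α, ∑ b : β, F a b c := by
  calc ∑ a : α, ∑ b : β, ∑ c : γ, F a b c
      = ∑ a : α, ∑ c : γ, ∑ b : β, F a b c :=
        Finset.sum_congr rfl fun a _ => Finset.sum_comm
    _ = ∑ c : γ, ∑ a : α, ∑ b : β, F a b c := Finset.sum_comm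


section Recomb
variable {L : Type} [Fintype L] [DecidableEq L] {A : L → Type}
  [∀ i, Fintype (A i)] [∀ i, DecidableEq (A i)]

noncomputable def mm (p : (∀ i, A i) → ℝ) (S : Finset L) (x : ∀ i, A i) : ℝ :=
  ∑ g : ∀ i, A i, if ∀ i ∈ S, g i = x i then p g else 0

lemma eq_recomb_iff {I : Finset L} {x g h : ∀ i, A i} :
    x = recomb I g h ↔ (∀ i ∈ I, g i = x i) ∧ (∀ i ∈ Iᶜ, h i = x i) := by
  constructor
  · rintro rfl
    constructor <;> intro i hi <;> simp_all [recomb, Finset.mem_compl]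
  · rintro ⟨h1, h2⟩
    funext i
    by_cases hi : i ∈ I
    · simp [recomb, hi, h1 i hi]
    · simp [recomb, hi, h2 i (Finset.mem_compl.2 hi)]

variable {q : (∀ i, A i) → ℝ}

lemma mm_nonneg (hq0 : ∀ g, 0 ≤ q g) (S : Finset L) (x : ∀ i, A i) : 0 ≤ mm q S x :=
  Finset.sum_nonneg fun g _ => by split_ifs; exacts [hq0 g, le_rfl]

lemma le_mm (hq0 : ∀ g, 0 ≤ q g) (S : Finset L) (x : ∀ i, A i) : q x ≤ mm q S x := by
  have := Finset.single_le_sum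
    (f := fun g => if ∀ i ∈ S, g i = x i then q g else 0)
    (fun g _ => by show 0 ≤ (if ∀ i ∈ S, g i = x i then q g else 0); split_ifs; exacts [hq0 g, le_rfl])
    (Finset.mem_univ x)
  simpa [mm] using this

lemma mm_univ (x : ∀ i, A i) : mm q univ x = q x := by
  rw [mm]
  have key : ∀ g : ∀ i, A i,
      (if ∀ i ∈ (univ : Finset L), g i = x i then q g else 0)
        = if g = x then q g else 0 := fun g =>
    if_congr (by simp [funext_iff]) rfl rfl
  rw [Finset.sum_congr rfl fun g _ => key g, Finset.sum_ite_eq' univ x q,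
    if_pos (Finset.mem_univ x)]

lemma mm_empty (x : ∀ i, A i) : mm q (∅ : Finset L) x = ∑ g : ∀ i, A i, q g := by
  rw [mm]; exact Finset.sum_congr rfl fun g _ => by simp

lemma mm_agree {S : Finset L} {x y : ∀ i, A i} (h : ∀ i ∈ S, x i = y i) :
    mm q S x = mm q S y := by
  refine Finset.sum_congr rfl fun g _ => ?_
  have : (∀ i ∈ S, g i = x i) ↔ (∀ i ∈ S, g i = y i) :=
    ⟨fun hg i hi => (hg i hi).trans (h i hi), fun hg i hi => (hg i hi).trans (h i hi).symm⟩
  rw [if_congr this rfl rfl]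

/-- Key marginalization: summing `mm S * mm Sᶜ * u` against a function `u`
depending only on the `S`-coordinates reproduces `∑ q * u`. -/
lemma sum_mm_mul_mm_mul (hq1 : (∑ g : ∀ i, A i, q g) = 1) (S : Finset L)
    (u : (∀ i, A i) → ℝ) (hu : ∀ g h : ∀ i, A i, (∀ i ∈ S, g i = h i) → u g = u h) :
    ∑ x : ∀ i, A i, mm q S x * mm q Sᶜ x * u x = ∑ x : ∀ i, A i, q x * u x := by
  have step1 : ∀ x : ∀ i, A i, mm q S x * mm q Sᶜ x * u x
      = ∑ g : ∀ i, A i, ∑ h : ∀ i, A i,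
          (if x = recomb S g h then q g * q h * u x else 0) := by
    intro x
    rw [mm, mm, Finset.sum_mul_sum, Finset.sum_mul]
    refine Finset.sum_congr rfl fun g _ => ?_
    rw [Finset.sum_mul]
    refine Finset.sum_congr rfl fun h _ => ?_
    rw [ite_zero_mul_ite_zero, ite_mul, zero_mul]
    exact if_congr eq_recomb_iff.symm rfl rfl
  rw [Finset.sum_congr rfl fun x _ => step1 x, ← sum_sum_sum_comm]
  have step2 : ∀ g h : ∀ i, A i,
      (∑ x : ∀ i, A i, if x = recomb S g h then q g * q h * u x else 0)
        = q g * q h * u g := by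
    intro g h
    rw [Finset.sum_ite_eq' univ (recomb S g h) (fun x => q g * q h * u x),
      if_pos (Finset.mem_univ _)]
    have : u (recomb S g h) = u g := (hu g (recomb S g h)
      (fun i hi => by simp [recomb, hi])).symm
    rw [this]
  rw [Finset.sum_congr rfl fun g _ => Finset.sum_congr rfl fun h _ => step2 g h]
  refine Finset.sum_congr rfl fun g _ => ?_
  calc ∑ h : ∀ i, A i, q g * q h * u g
      = ∑ h : ∀ i, A i, (q g * u g) * q h :=
        Finset.sum_congr rfl fun h _ => by ring
    _ = (q g * u g) * ∑ h : ∀ i, A i, q h := by rw [Finset.mul_sum]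
    _ = q g * u g := by rw [hq1, mul_one]
lemma sum_sum_indicator_recomb (p : (∀ i, A i) → ℝ) (I : Finset L) (x : ∀ i, A i) :
    ∑ g : ∀ i, A i, ∑ h : ∀ i, A i, p g * p h * (if x = recomb I g h then (1:ℝ) else 0)
      = mm p I x * mm p Iᶜ x := by
  rw [mm, mm, Finset.sum_mul_sum]
  refine Finset.sum_congr rfl fun g _ => Finset.sum_congr rfl fun h _ => ?_
  by_cases h1 : ∀ i ∈ I, g i = x i
  · by_cases h2 : ∀ i ∈ Iᶜ, h i = x i
    · rw [if_pos h1, if_pos h2, if_pos (eq_recomb_iff.2 ⟨h1, h2⟩)]; ring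
    · rw [if_neg h2, if_neg (fun hc => h2 (eq_recomb_iff.1 hc).2)]; ring
  · rw [if_neg h1, if_neg (fun hc => h1 (eq_recomb_iff.1 hc).1)]; ring

lemma recF_eq (c : Finset L → ℝ) (p : (∀ i, A i) → ℝ) (x : ∀ i, A i) :
    recF c p x
      = (1/2) * ∑ I : Finset L,
          c I * (mm p I x * mm p Iᶜ x - (∑ g : ∀ i, A i, p g) * p x) := by
  have key : ∀ I : Finset L,
      (∑ g : ∀ i, A i, ∑ h : ∀ i, A i, c I * p g * p h *
        ((if x = recomb I g h then (1:ℝ) else 0) + (if x = recomb Iᶜ g h then 1 else 0)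
          - (if x = g then 1 else 0) - (if x = h then 1 else 0)))
      = 2 * (c I * (mm p I x * mm p Iᶜ x - (∑ g : ∀ i, A i, p g) * p x)) := by
    intro I
    have e1 := sum_sum_indicator_recomb p I x
    have e2 := sum_sum_indicator_recomb p Iᶜ x
    rw [compl_compl] at e2
    have e3 : ∑ g : ∀ i, A i, ∑ h : ∀ i, A i,
        p g * p h * (if x = g then (1:ℝ) else 0) = p x * ∑ g : ∀ i, A i, p g := by
      have hg : ∀ g : ∀ i, A i, (∑ h : ∀ i, A i, p g * p h * (if x = g then (1:ℝ) else 0))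
          = (if x = g then p g else 0) * ∑ h : ∀ i, A i, p h := fun g => by
        rw [Finset.mul_sum]
        refine Finset.sum_congr rfl fun h _ => by by_cases hx : x = g <;> simp [hx]
      rw [Finset.sum_congr rfl fun g _ => hg g, ← Finset.sum_mul,
        Finset.sum_ite_eq univ x p, if_pos (Finset.mem_univ x)]
    have e4 : ∑ g : ∀ i, A i, ∑ h : ∀ i, A i,
        p g * p h * (if x = h then (1:ℝ) else 0) = (∑ g : ∀ i, A i, p g) * p x := by
      have hg : ∀ g : ∀ i, A i, (∑ h : ∀ i, A i, p g * p h * (if x = h then (1:ℝ) else 0))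
          = p g * p x := fun g => by
        rw [show (∑ h : ∀ i, A i, p g * p h * (if x = h then (1:ℝ) else 0))
            = ∑ h : ∀ i, A i, (if x = h then p g * p h else 0) from
          Finset.sum_congr rfl fun h _ => by by_cases hx : x = h <;> simp [hx],
          Finset.sum_ite_eq univ x (fun h => p g * p h), if_pos (Finset.mem_univ x)]
      rw [Finset.sum_congr rfl fun g _ => hg g, ← Finset.sum_mul]
    calc (∑ g : ∀ i, A i, ∑ h : ∀ i, A i, c I * p g * p h *
        ((if x = recomb I g h then (1:ℝ) else 0) + (if x = recomb Iᶜ g h then 1 else 0)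
          - (if x = g then 1 else 0) - (if x = h then 1 else 0)))
        = ∑ g : ∀ i, A i, ∑ h : ∀ i, A i,
          (c I * (p g * p h * (if x = recomb I g h then (1:ℝ) else 0))
           + c I * (p g * p h * (if x = recomb Iᶜ g h then (1:ℝ) else 0))
           - c I * (p g * p h * (if x = g then (1:ℝ) else 0))
           - c I * (p g * p h * (if x = h then (1:ℝ) else 0))) :=
        Finset.sum_congr rfl fun g _ => Finset.sum_congr rfl fun h _ => by ring
      _ = c I * (mm p I x * mm p Iᶜ x) + c I * (mm p Iᶜ x * mm p I x)
          - c I * (p x * ∑ g : ∀ i, A i, p g) - c I * ((∑ g : ∀ i, A i, p g) * p x) := by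
        simp only [Finset.sum_sub_distrib, Finset.sum_add_distrib, ← Finset.mul_sum]
        rw [e1, e2, e3, e4]
      _ = 2 * (c I * (mm p I x * mm p Iᶜ x - (∑ g : ∀ i, A i, p g) * p x)) := by ring
  simp only [recF]
  rw [sum_sum_sum_comm, Finset.sum_congr rfl fun I _ => key I, ← Finset.mul_sum]
  ring
end Recomb

section Entropy
variable {L : Type} [Fintype L] [DecidableEq L] {A : L → Type}
  [∀ i, Fintype (A i)] [∀ i, DecidableEq (A i)] {q : (∀ i, A i) → ℝ}

lemma sum_mm_mul_mm_mul' (hq1 : (∑ g : ∀ i, A i, q g) = 1) (S : Finset L)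
    (u : (∀ i, A i) → ℝ) (hu : ∀ g h : ∀ i, A i, (∀ i ∈ Sᶜ, g i = h i) → u g = u h) :
    ∑ x : ∀ i, A i, mm q S x * mm q Sᶜ x * u x = ∑ x : ∀ i, A i, q x * u x := by
  have h := sum_mm_mul_mm_mul hq1 Sᶜ u hu
  rw [compl_compl] at h
  rw [← h]
  exact Finset.sum_congr rfl fun x _ => by ring

lemma sum_mm_mul_mm (hq1 : (∑ g : ∀ i, A i, q g) = 1) (S : Finset L) :
    ∑ x : ∀ i, A i, mm q S x * mm q Sᶜ x = 1 := by
  have h := sum_mm_mul_mm_mul hq1 S (fun _ => 1) (fun _ _ _ => rfl)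
  simpa [hq1] using h

lemma entropy_le (hq0 : ∀ g, 0 ≤ q g) (hq1 : (∑ g : ∀ i, A i, q g) = 1) (S : Finset L) :
    ∑ x : ∀ i, A i, Real.negMulLog (q x)
      ≤ ∑ x : ∀ i, A i, Real.negMulLog (mm q S x * mm q Sᶜ x) := by
  have hqS : ∀ x, 0 < q x → 0 < mm q S x := fun x hx => lt_of_lt_of_le hx (le_mm hq0 S x)
  have hqSc : ∀ x, 0 < q x → 0 < mm q Sᶜ x := fun x hx => lt_of_lt_of_le hx (le_mm hq0 Sᶜ x)
  have stepA : ∀ x, Real.negMulLog (mm q S x * mm q Sᶜ x)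
      = -(mm q S x * mm q Sᶜ x * Real.log (mm q S x))
        + -(mm q S x * mm q Sᶜ x * Real.log (mm q Sᶜ x)) := by
    intro x
    rcases eq_or_lt_of_le (mm_nonneg hq0 S x) with h1 | h1
    · simp [← h1, Real.negMulLog]
    rcases eq_or_lt_of_le (mm_nonneg hq0 Sᶜ x) with h2 | h2
    · simp [← h2, Real.negMulLog]
    · rw [Real.negMulLog, Real.log_mul h1.ne' h2.ne']; ring
  have stepB1 : ∑ x : ∀ i, A i, mm q S x * mm q Sᶜ x * Real.log (mm q S x)
      = ∑ x : ∀ i, A i, q x * Real.log (mm q S x) :=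
    sum_mm_mul_mm_mul hq1 S _ (fun g h hgh => by
      show Real.log (mm q S g) = Real.log (mm q S h); rw [mm_agree hgh])
  have stepB2 : ∑ x : ∀ i, A i, mm q S x * mm q Sᶜ x * Real.log (mm q Sᶜ x)
      = ∑ x : ∀ i, A i, q x * Real.log (mm q Sᶜ x) :=
    sum_mm_mul_mm_mul' hq1 S _ (fun g h hgh => by
      show Real.log (mm q Sᶜ g) = Real.log (mm q Sᶜ h); rw [mm_agree hgh])
  have stepC : ∑ x : ∀ i, A i, Real.negMulLog (mm q S x * mm q Sᶜ x)
      = ∑ x : ∀ i, A i, -(q x * Real.log (mm q S x * mm q Sᶜ x)) := by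
    calc ∑ x : ∀ i, A i, Real.negMulLog (mm q S x * mm q Sᶜ x)
        = ∑ x : ∀ i, A i, (-(mm q S x * mm q Sᶜ x * Real.log (mm q S x))
            + -(mm q S x * mm q Sᶜ x * Real.log (mm q Sᶜ x))) :=
          Finset.sum_congr rfl fun x _ => stepA x
      _ = (∑ x : ∀ i, A i, -(mm q S x * mm q Sᶜ x * Real.log (mm q S x)))
            + ∑ x : ∀ i, A i, -(mm q S x * mm q Sᶜ x * Real.log (mm q Sᶜ x)) :=
          Finset.sum_add_distrib
      _ = -(∑ x : ∀ i, A i, mm q S x * mm q Sᶜ x * Real.log (mm q S x))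
            + -(∑ x : ∀ i, A i, mm q S x * mm q Sᶜ x * Real.log (mm q Sᶜ x)) := by
          rw [Finset.sum_neg_distrib, Finset.sum_neg_distrib]
      _ = -(∑ x : ∀ i, A i, q x * Real.log (mm q S x))
            + -(∑ x : ∀ i, A i, q x * Real.log (mm q Sᶜ x)) := by rw [stepB1, stepB2]
      _ = ∑ x : ∀ i, A i, (-(q x * Real.log (mm q S x)) + -(q x * Real.log (mm q Sᶜ x))) := by
          rw [← Finset.sum_neg_distrib, ← Finset.sum_neg_distrib, ← Finset.sum_add_distrib]
      _ = ∑ x : ∀ i, A i, -(q x * Real.log (mm q S x * mm q Sᶜ x)) := by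
          refine Finset.sum_congr rfl fun x _ => ?_
          rcases eq_or_lt_of_le (hq0 x) with h0 | h0
          · simp [← h0]
          · rw [Real.log_mul (hqS x h0).ne' (hqSc x h0).ne']; ring
  rw [stepC]
  have hsum_r : ∑ x : ∀ i, A i, mm q S x * mm q Sᶜ x = 1 := sum_mm_mul_mm hq1 S
  have key : ∀ x : ∀ i, A i,
      Real.negMulLog (q x) - (-(q x * Real.log (mm q S x * mm q Sᶜ x)))
        ≤ mm q S x * mm q Sᶜ x - q x := by
    intro x
    rcases eq_or_lt_of_le (hq0 x) with h0 | h0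
    · rw [← h0]
      simp [Real.negMulLog]
      exact mul_nonneg (mm_nonneg hq0 S x) (mm_nonneg hq0 Sᶜ x)
    · have hrx : 0 < mm q S x * mm q Sᶜ x := mul_pos (hqS x h0) (hqSc x h0)
      have hlog : Real.log (mm q S x * mm q Sᶜ x / q x) ≤ mm q S x * mm q Sᶜ x / q x - 1 :=
        Real.log_le_sub_one_of_pos (div_pos hrx h0)
      rw [Real.log_div hrx.ne' h0.ne'] at hlog
      rw [Real.negMulLog]
      calc -q x * Real.log (q x) - -(q x * Real.log (mm q S x * mm q Sᶜ x))
          = q x * (Real.log (mm q S x * mm q Sᶜ x) - Real.log (q x)) := by ring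
        _ ≤ q x * (mm q S x * mm q Sᶜ x / q x - 1) :=
            mul_le_mul_of_nonneg_left hlog (hq0 x)
        _ = mm q S x * mm q Sᶜ x - q x := by field_simp
  calc ∑ x : ∀ i, A i, Real.negMulLog (q x)
      = ∑ x : ∀ i, A i, ((Real.negMulLog (q x)
            - (-(q x * Real.log (mm q S x * mm q Sᶜ x))))
          + (-(q x * Real.log (mm q S x * mm q Sᶜ x)))) :=
        Finset.sum_congr rfl fun x _ => by ring
    _ ≤ ∑ x : ∀ i, A i, ((mm q S x * mm q Sᶜ x - q x)
          + (-(q x * Real.log (mm q S x * mm q Sᶜ x)))) :=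
        Finset.sum_le_sum fun x _ => add_le_add_left (key x) _
    _ = ∑ x : ∀ i, A i, -(q x * Real.log (mm q S x * mm q Sᶜ x)) := by
        rw [Finset.sum_add_distrib, Finset.sum_sub_distrib, hsum_r, hq1]
        ring
end Entropy

section Good
variable {L : Type} [Fintype L] [DecidableEq L] {A : L → Type}
  [∀ i, Fintype (A i)] [∀ i, DecidableEq (A i)] {q : (∀ i, A i) → ℝ}

lemma good_of_equilibrium (hq0 : ∀ g, 0 ≤ q g) (hq1 : (∑ g : ∀ i, A i, q g) = 1)
    (c : Finset L → ℝ) (hc : ∀ I, 0 ≤ c I)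
    (heq : ∀ x, ∑ I : Finset L, c I * (mm q I x * mm q Iᶜ x)
      = (∑ I : Finset L, c I) * q x)
    {I₀ : Finset L} (hI₀ : 0 < c I₀) :
    ∀ x, mm q I₀ x * mm q I₀ᶜ x = q x := by
  set C : ℝ := ∑ I : Finset L, c I with hC
  have hCpos : 0 < C := by
    refine lt_of_lt_of_le hI₀ ?_
    exact Finset.single_le_sum (fun I _ => hc I) (Finset.mem_univ I₀)
  set w : Finset L → ℝ := fun I => c I / C with hw
  have hw0 : ∀ I, 0 ≤ w I := fun I => div_nonneg (hc I) hCpos.le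
  have hw1 : ∑ I : Finset L, w I = 1 := by
    rw [hw, ← Finset.sum_div]
    exact div_self hCpos.ne'
  have hcomb : ∀ x, ∑ I : Finset L, w I * (mm q I x * mm q Iᶜ x) = q x := by
    intro x
    rw [hw]
    have : ∑ I : Finset L, c I / C * (mm q I x * mm q Iᶜ x)
        = (∑ I : Finset L, c I * (mm q I x * mm q Iᶜ x)) / C := by
      rw [Finset.sum_div]
      exact Finset.sum_congr rfl fun I _ => by ring
    rw [this, heq x]
    field_simp
  have hrmem : ∀ (I : Finset L) (x : ∀ i, A i),
      mm q I x * mm q Iᶜ x ∈ Set.Ici (0:ℝ) := fun I x =>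
    mul_nonneg (mm_nonneg hq0 I x) (mm_nonneg hq0 Iᶜ x)
  -- pointwise Jensen
  have hjensen : ∀ x : ∀ i, A i,
      ∑ I : Finset L, w I * Real.negMulLog (mm q I x * mm q Iᶜ x)
        ≤ Real.negMulLog (q x) := by
    intro x
    have := Real.concaveOn_negMulLog.le_map_sum (t := Finset.univ)
      (w := w) (p := fun I => mm q I x * mm q Iᶜ x)
      (fun I _ => hw0 I) hw1 (fun I _ => hrmem I x)
    simp only [smul_eq_mul] at this
    rwa [hcomb x] at this
  -- total inequality the other way
  have htot : ∑ x : ∀ i, A i, Real.negMulLog (q x)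
      ≤ ∑ x : ∀ i, A i, ∑ I : Finset L, w I * Real.negMulLog (mm q I x * mm q Iᶜ x) := by
    rw [Finset.sum_comm]
    calc ∑ x : ∀ i, A i, Real.negMulLog (q x)
        = ∑ I : Finset L, w I * ∑ x : ∀ i, A i, Real.negMulLog (q x) := by
          rw [← Finset.sum_mul, hw1, one_mul]
      _ ≤ ∑ I : Finset L, w I * ∑ x : ∀ i, A i,
            Real.negMulLog (mm q I x * mm q Iᶜ x) := by
          refine Finset.sum_le_sum fun I _ => ?_
          exact mul_le_mul_of_nonneg_left (entropy_le hq0 hq1 I) (hw0 I)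
      _ = ∑ I : Finset L, ∑ x : ∀ i, A i,
            w I * Real.negMulLog (mm q I x * mm q Iᶜ x) := by
          exact Finset.sum_congr rfl fun I _ => Finset.mul_sum _ _ _
  -- pointwise equality
  have hpteq : ∀ x : ∀ i, A i,
      Real.negMulLog (q x)
        = ∑ I : Finset L, w I * Real.negMulLog (mm q I x * mm q Iᶜ x) := by
    have hzero : ∑ x : ∀ i, A i, (Real.negMulLog (q x)
        - ∑ I : Finset L, w I * Real.negMulLog (mm q I x * mm q Iᶜ x)) = 0 := by
      rw [Finset.sum_sub_distrib]
      have h1 := htot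
      have h2 : ∑ x : ∀ i, A i, ∑ I : Finset L,
          w I * Real.negMulLog (mm q I x * mm q Iᶜ x)
          ≤ ∑ x : ∀ i, A i, Real.negMulLog (q x) :=
        Finset.sum_le_sum fun x _ => hjensen x
      linarith
    intro x
    have := (Finset.sum_eq_zero_iff_of_nonneg (fun y _ => by
      have := hjensen y; simp only [sub_nonneg]; linarith)).1 hzero x (Finset.mem_univ x)
    linarith [this]
  -- strict concavity: extract equality of the points with positive weight
  intro x
  have := (Real.strictConcaveOn_negMulLog.map_sum_eq_iff' (t := Finset.univ)
    (w := w) (p := fun I => mm q I x * mm q Iᶜ x)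
    (fun I _ => hw0 I) hw1 (fun I _ => hrmem I x))
  simp only [smul_eq_mul] at this
  have heqpt : Real.negMulLog (∑ I : Finset L, w I * (mm q I x * mm q Iᶜ x))
      = ∑ I : Finset L, w I * Real.negMulLog (mm q I x * mm q Iᶜ x) := by
    rw [hcomb x]; exact hpteq x
  have hall := this.1 heqpt I₀ (Finset.mem_univ I₀)
    (by rw [hw]; positivity)
  rw [hall, hcomb x]
end Good

section Boolean
variable {L : Type} [Fintype L] [DecidableEq L] {A : L → Type}
  [∀ i, Fintype (A i)] [∀ i, DecidableEq (A i)] {q : (∀ i, A i) → ℝ}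

lemma recomb_invol (S : Finset L) (g h : ∀ i, A i) :
    recomb S (recomb S g h) (recomb S h g) = g := by
  funext i
  by_cases hi : i ∈ S <;> simp [recomb, hi]

def phiR (S : Finset L) : ((∀ i, A i) × (∀ i, A i)) ≃ ((∀ i, A i) × (∀ i, A i)) where
  toFun x := (recomb S x.1 x.2, recomb S x.2 x.1)
  invFun x := (recomb S x.1 x.2, recomb S x.2 x.1)
  left_inv x := by simp [recomb_invol]
  right_inv x := by simp [recomb_invol]

lemma sum_phiR (S : Finset L) (F : (∀ i, A i) → (∀ i, A i) → ℝ) :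
    ∑ g : ∀ i, A i, ∑ h : ∀ i, A i, F g h
      = ∑ g : ∀ i, A i, ∑ h : ∀ i, A i, F (recomb S g h) (recomb S h g) := by
  rw [← Fintype.sum_prod_type (f := fun z => F z.1 z.2),
      ← Fintype.sum_prod_type (f := fun z => F (recomb S z.1 z.2) (recomb S z.2 z.1))]
  exact (Equiv.sum_comp (phiR S) (fun z => F z.1 z.2)).symm

/-- `S` is a "good" pattern for `q`: `q` factorizes across `{S, Sᶜ}`. -/
def good (q : (∀ i, A i) → ℝ) (S : Finset L) : Prop :=
  ∀ x, mm q S x * mm q Sᶜ x = q x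

lemma sum_recomb_pair (q : (∀ i, A i) → ℝ) (S : Finset L) (g : ∀ i, A i) :
    ∑ h : ∀ i, A i, q (recomb S g h) * q (recomb S h g)
      = mm q S g * mm q Sᶜ g := by
  have expand : mm q S g * mm q Sᶜ g
      = ∑ k : ∀ i, A i, ∑ l : ∀ i, A i,
          (if (∀ i ∈ S, k i = g i) ∧ (∀ i ∈ Sᶜ, l i = g i) then q k * q l else 0) := by
    rw [mm, mm, Finset.sum_mul_sum]
    exact Finset.sum_congr rfl fun k _ => Finset.sum_congr rfl fun l _ =>
      ite_zero_mul_ite_zero _ _ _ _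
  rw [expand, sum_phiR S (fun k l =>
    if (∀ i ∈ S, k i = g i) ∧ (∀ i ∈ Sᶜ, l i = g i) then q k * q l else 0)]
  have cond : ∀ a b : ∀ i, A i,
      ((∀ i ∈ S, recomb S a b i = g i) ∧ (∀ i ∈ Sᶜ, recomb S b a i = g i)) ↔ a = g := by
    intro a b
    constructor
    · rintro ⟨h1, h2⟩
      funext i
      by_cases hi : i ∈ S
      · have := h1 i hi; simpa [recomb, hi] using this
      · have := h2 i (Finset.mem_compl.2 hi); simpa [recomb, hi] using this
    · rintro rfl
      constructor
      · intro i hi; simp [recomb, hi]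
      · intro i hi; simp [recomb, Finset.mem_compl.1 hi]
  have step : ∀ a : ∀ i, A i, (∑ b : ∀ i, A i,
      if (∀ i ∈ S, recomb S a b i = g i) ∧ (∀ i ∈ Sᶜ, recomb S b a i = g i)
        then q (recomb S a b) * q (recomb S b a) else 0)
      = if a = g then ∑ b : ∀ i, A i, q (recomb S a b) * q (recomb S b a) else 0 := by
    intro a
    by_cases ha : a = g
    · rw [if_pos ha]
      exact Finset.sum_congr rfl fun b _ => if_pos ((cond a b).2 ha)
    · rw [if_neg ha]
      exact Finset.sum_eq_zero fun b _ => if_neg (fun hcnd => ha ((cond a b).1 hcnd))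
  rw [Finset.sum_congr rfl fun a _ => step a,
    Finset.sum_ite_eq' univ g (fun a => ∑ b : ∀ i, A i, q (recomb S a b) * q (recomb S b a)),
    if_pos (Finset.mem_univ g)]

/-- The key marginal factorization: if `q` factorizes across `{S, Sᶜ}`, then any
marginal `mm q T` splits along `S`. -/
lemma mm_split (hS : good q S) (T : Finset L) (x : ∀ i, A i) :
    mm q T x = mm q (T ∩ S) x * mm q (T \ S) x := by
  have expand : mm q (T ∩ S) x * mm q (T \ S) x
      = ∑ k : ∀ i, A i, ∑ l : ∀ i, A i,
          (if (∀ i ∈ T ∩ S, k i = x i) ∧ (∀ i ∈ T \ S, l i = x i) then q k * q l else 0) := by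
    rw [mm, mm, Finset.sum_mul_sum]
    exact Finset.sum_congr rfl fun k _ => Finset.sum_congr rfl fun l _ =>
      ite_zero_mul_ite_zero _ _ _ _
  rw [expand, sum_phiR S (fun k l =>
    if (∀ i ∈ T ∩ S, k i = x i) ∧ (∀ i ∈ T \ S, l i = x i) then q k * q l else 0)]
  have cond : ∀ a b : ∀ i, A i,
      ((∀ i ∈ T ∩ S, recomb S a b i = x i) ∧ (∀ i ∈ T \ S, recomb S b a i = x i))
        ↔ ∀ i ∈ T, a i = x i := by
    intro a b
    constructor
    · rintro ⟨h1, h2⟩ i hi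
      by_cases hiS : i ∈ S
      · have := h1 i (Finset.mem_inter.2 ⟨hi, hiS⟩); simpa [recomb, hiS] using this
      · have := h2 i (Finset.mem_sdiff.2 ⟨hi, hiS⟩); simpa [recomb, hiS] using this
    · intro h
      constructor
      · intro i hi
        have hiS := (Finset.mem_inter.1 hi).2
        simpa [recomb, hiS] using h i (Finset.mem_inter.1 hi).1
      · intro i hi
        have hiS := (Finset.mem_sdiff.1 hi).2
        simpa [recomb, hiS] using h i (Finset.mem_sdiff.1 hi).1
  have step : ∀ a : ∀ i, A i, (∑ b : ∀ i, A i,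
      if (∀ i ∈ T ∩ S, recomb S a b i = x i) ∧ (∀ i ∈ T \ S, recomb S b a i = x i)
        then q (recomb S a b) * q (recomb S b a) else 0)
      = if (∀ i ∈ T, a i = x i) then q a else 0 := by
    intro a
    by_cases ha : ∀ i ∈ T, a i = x i
    · rw [if_pos ha, ← hS a, ← sum_recomb_pair q S a]
      exact Finset.sum_congr rfl fun b _ => if_pos ((cond a b).2 ha)
    · rw [if_neg ha]
      exact Finset.sum_eq_zero fun b _ => if_neg (fun hcnd => ha ((cond a b).1 hcnd))
  rw [Finset.sum_congr rfl fun a _ => step a]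
  rfl

lemma good_univ (hq1 : (∑ g : ∀ i, A i, q g) = 1) : good q (univ : Finset L) := by
  intro x
  rw [mm_univ, Finset.compl_univ, mm_empty, hq1, mul_one]

lemma good_compl {S : Finset L} (hS : good q S) : good q Sᶜ := by
  intro x
  rw [compl_compl, mul_comm]
  exact hS x

lemma good_inter {S T : Finset L} (hS : good q S) (hT : good q T) : good q (S ∩ T) := by
  intro x
  have h1 : mm q S x = mm q (S ∩ T) x * mm q (S \ T) x := mm_split hT S x
  have h3 : mm q ((S ∩ T)ᶜ) x = mm q ((S ∩ T)ᶜ ∩ S) x * mm q ((S ∩ T)ᶜ \ S) x :=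
    mm_split hS ((S ∩ T)ᶜ) x
  have e1 : (S ∩ T)ᶜ ∩ S = S \ T := by ext i; simp; tauto
  have e2 : (S ∩ T)ᶜ \ S = Sᶜ := by ext i; simp; tauto
  rw [e1, e2] at h3
  rw [h3, ← hS x, h1]
  ring
end Boolean

section Assemble
variable {L : Type} [Fintype L] [DecidableEq L] {A : L → Type}
  [∀ i, Fintype (A i)] [∀ i, DecidableEq (A i)] {q : (∀ i, A i) → ℝ}

lemma mem_finset_inf {ι : Type} [DecidableEq ι] (F : Finset ι) (f : ι → Finset L) (k : L) :
    k ∈ F.inf f ↔ ∀ j ∈ F, k ∈ f j := by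
  induction F using Finset.induction_on with
  | empty => simp [Finset.inf_empty, Finset.top_eq_univ]
  | @insert a F ha ih =>
    rw [Finset.inf_insert]
    have : f a ⊓ F.inf f = f a ∩ F.inf f := rfl
    rw [this, Finset.mem_inter, ih]
    simp

lemma good_inf (hq1 : (∑ g : ∀ i, A i, q g) = 1) {ι : Type} [DecidableEq ι]
    (F : Finset ι) (f : ι → Finset L) :
    (∀ j ∈ F, good q (f j)) → good q (F.inf f) := by
  induction F using Finset.induction_on with
  | empty =>
    intro _
    rw [Finset.inf_empty, Finset.top_eq_univ]
    exact good_univ hq1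
  | @insert a F ha ih =>
    intro hf
    rw [Finset.inf_insert]
    have he : f a ⊓ F.inf f = f a ∩ F.inf f := rfl
    rw [he]
    exact good_inter (hf a (Finset.mem_insert_self a F))
      (ih fun j hj => hf j (Finset.mem_insert_of_mem hj))

lemma good_singleton (hq1 : (∑ g : ∀ i, A i, q g) = 1) (i : L)
    (hpair : ∀ j : L, j ≠ i → ∃ S : Finset L, good q S ∧ i ∈ S ∧ j ∉ S) :
    good q {i} := by
  classical
  choose S hSg hSi hSj using hpair
  let f : L → Finset L := fun j => if h : j = i then univ else S j h
  have hf : ∀ j ∈ (univ : Finset L), good q (f j) := by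
    intro j _
    by_cases h : j = i
    · simp only [f, dif_pos h]; exact good_univ hq1
    · simp only [f, dif_neg h]; exact hSg j h
  have hinf : (univ : Finset L).inf f = {i} := by
    apply Finset.ext
    intro k
    rw [mem_finset_inf, Finset.mem_singleton]
    constructor
    · intro hk
      by_contra hki
      have := hk k (Finset.mem_univ k)
      rw [show f k = S k hki from dif_neg hki] at this
      exact hSj k hki this
    · intro hk j _
      by_cases h : j = i
      · rw [show f j = univ from dif_pos h]; exact Finset.mem_univ _
      · rw [show f j = S j h from dif_neg h, hk]; exact hSi j h
  rw [← hinf]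
  exact good_inf hq1 univ f hf

lemma prod_form_of_good_singletons (hq1 : (∑ g : ∀ i, A i, q g) = 1)
    (hgs : ∀ i : L, good q ({i} : Finset L)) :
    ∀ x : ∀ i, A i, q x = ∏ i : L, mm q {i} x := by
  have claim : ∀ F : Finset L, ∀ x : ∀ i, A i,
      q x = (∏ i ∈ F, mm q {i} x) * mm q Fᶜ x := by
    intro F
    induction F using Finset.induction_on with
    | empty =>
      intro x
      rw [Finset.prod_empty, one_mul, Finset.compl_empty, mm_univ]
    | @insert a F ha ih =>
      intro x
      have hsplit : mm q Fᶜ x = mm q (Fᶜ ∩ {a}) x * mm q (Fᶜ \ {a}) x :=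
        mm_split (hgs a) Fᶜ x
      have e1 : Fᶜ ∩ {a} = {a} := by
        ext k; simp only [Finset.mem_inter, Finset.mem_compl, Finset.mem_singleton]
        constructor
        · rintro ⟨_, rfl⟩; rfl
        · rintro rfl; exact ⟨ha, rfl⟩
      have e2 : Fᶜ \ {a} = (insert a F)ᶜ := by
        ext k; simp [Finset.mem_sdiff, Finset.mem_compl, Finset.mem_insert]
        tauto
      rw [e1, e2] at hsplit
      rw [ih x, hsplit, Finset.prod_insert ha]
      ring
  intro x
  have := claim univ x
  rwa [Finset.compl_univ, mm_empty, hq1, mul_one] at this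

lemma marg_eq_mm (q : (∀ i, A i) → ℝ) (i : L) (x : ∀ i, A i) :
    (∑ g : ∀ j, A j, if g i = x i then q g else 0) = mm q {i} x := by
  refine Finset.sum_congr rfl fun g _ => ?_
  refine if_congr ?_ rfl rfl
  simp

/-- Converse: a product measure has all patterns good. -/
lemma mm_prod_form (μ : ∀ i : L, A i → ℝ) (hμ1 : ∀ i, ∑ b : A i, μ i b = 1)
    (hq : ∀ g : ∀ i, A i, q g = ∏ i : L, μ i (g i)) (S : Finset L) (x : ∀ i, A i) :
    mm q S x = ∏ i ∈ S, μ i (x i) := by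
  classical
  have key : ∀ g : ∀ i, A i,
      (if ∀ i ∈ S, g i = x i then q g else 0)
        = ∏ i : L, (if i ∈ S then (if g i = x i then μ i (g i) else 0) else μ i (g i)) := by
    intro g
    by_cases hcond : ∀ i ∈ S, g i = x i
    · rw [if_pos hcond, hq g]
      refine Finset.prod_congr rfl fun i _ => ?_
      by_cases hi : i ∈ S
      · rw [if_pos hi, if_pos (hcond i hi)]
      · rw [if_neg hi]
    · rw [if_neg hcond]
      push_neg at hcond
      obtain ⟨i₀, hi₀S, hi₀⟩ := hcond
      refine (Finset.prod_eq_zero (Finset.mem_univ i₀) ?_).symm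
      rw [if_pos hi₀S, if_neg hi₀]
  rw [mm, Finset.sum_congr rfl fun g _ => key g]
  rw [← Fintype.prod_sum (fun (i : L) (b : A i) =>
    if i ∈ S then (if b = x i then μ i b else 0) else μ i b)]
  have factor : ∀ i : L,
      (∑ b : A i, if i ∈ S then (if b = x i then μ i b else 0) else μ i b)
        = if i ∈ S then μ i (x i) else 1 := by
    intro i
    by_cases hi : i ∈ S
    · simp only [if_pos hi]
      rw [Finset.sum_ite_eq' univ (x i) (μ i), if_pos (Finset.mem_univ _)]
    · simp only [if_neg hi]
      exact hμ1 i
  rw [Finset.prod_congr rfl fun i _ => factor i]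
  rw [Finset.prod_ite_mem univ S (fun i => μ i (x i)), Finset.univ_inter]
end Assemble

/-- **Equilibria of the recombination dynamics off the simplex.**
Under the standing assumption, a nonnegative point `p` with positive total mass
`σ = Σ_g p(g) > 0` is an equilibrium of the recombination dynamics, `F(p) = 0`, if and
only if `p(g) = σ^{1−L} ∏ᵢ pᵢ(gᵢ)` for all gametes `g`. -/
theorem equilibrium_iff_scaled_product_of_marginals
    {L : Type} [Fintype L] [DecidableEq L] [Nonempty L]
    (A : L → Type) [∀ i, Fintype (A i)] [∀ i, DecidableEq (A i)]
    (hA : ∀ i, 2 ≤ Fintype.card (A i))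
    (c : Finset L → ℝ) (hc : ∀ I, 0 ≤ c I) (hcsym : ∀ I, c I = c Iᶜ)
    (hsep : ∀ i j : L, i ≠ j →
      0 < ∑ I ∈ univ.filter (fun I : Finset L => i ∈ I ∧ j ∉ I), c I)
    (p : (∀ i, A i) → ℝ) (hp0 : ∀ g, 0 ≤ p g)
    (σ : ℝ) (hσ : σ = ∑ g : ∀ i, A i, p g) (hσpos : 0 < σ) :
    recF c p = 0 ↔
      ∀ g : ∀ i, A i, p g = σ ^ (1 - (Fintype.card L : ℤ)) * ∏ i : L, marg p i (g i) := by
  classical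
  set n : ℕ := Fintype.card L with hn
  set q : (∀ i, A i) → ℝ := fun g => p g / σ with hqdef
  have hq0 : ∀ g, 0 ≤ q g := fun g => div_nonneg (hp0 g) hσpos.le
  have hq1 : ∑ g : ∀ i, A i, q g = 1 := by
    rw [hqdef, ← Finset.sum_div, ← hσ, div_self hσpos.ne']
  have hpq : ∀ g, p g = σ * q g := fun g => by
    rw [hqdef]; field_simp
  have hmmq : ∀ (S : Finset L) (x : ∀ i, A i), mm q S x = mm p S x / σ := by
    intro S x
    rw [mm, mm, Finset.sum_div]
    refine Finset.sum_congr rfl fun g _ => ?_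
    split_ifs <;> simp [hqdef]
  have hmargq : ∀ (i : L) (a : A i), marg q i a = marg p i a / σ := by
    intro i a
    rw [marg, marg, Finset.sum_div]
    refine Finset.sum_congr rfl fun g _ => ?_
    split_ifs <;> simp [hqdef]
  have hσn : σ ^ ((1:ℤ) - (n:ℤ)) = σ / σ ^ n := by
    rw [zpow_sub₀ hσpos.ne', zpow_one, zpow_natCast]
  have hσnne : (σ:ℝ) ^ n ≠ 0 := pow_ne_zero n hσpos.ne'
  have hprodq : ∀ g : ∀ i, A i,
      (∏ i : L, marg q i (g i)) = (∏ i : L, marg p i (g i)) / σ ^ n := by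
    intro g
    calc ∏ i : L, marg q i (g i)
        = ∏ i : L, (marg p i (g i) / σ) :=
          Finset.prod_congr rfl fun i _ => hmargq i (g i)
      _ = (∏ i : L, marg p i (g i)) / ∏ _i : L, σ := Finset.prod_div_distrib _ _
      _ = (∏ i : L, marg p i (g i)) / σ ^ n := by
          rw [Finset.prod_const, Finset.card_univ, hn]
  have equivForm : (∀ g : ∀ i, A i,
        p g = σ ^ ((1:ℤ) - (n:ℤ)) * ∏ i : L, marg p i (g i))
      ↔ (∀ g : ∀ i, A i, q g = ∏ i : L, marg q i (g i)) := by
    constructor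
    · intro h g
      show p g / σ = ∏ i : L, marg q i (g i)
      rw [h g, hprodq g, hσn]
      field_simp
      try ring
    · intro h g
      rw [hpq g, h g, hprodq g, hσn]
      field_simp
      try ring
  -- `marg q` sums to one
  have hmarg1 : ∀ i : L, ∑ b : A i, marg q i b = 1 := by
    intro i
    rw [show ∑ b : A i, marg q i b
        = ∑ b : A i, ∑ g : ∀ j, A j, if g i = b then q g else 0 from rfl,
      Finset.sum_comm]
    rw [Finset.sum_congr rfl fun g _ => by
      rw [Finset.sum_ite_eq univ (g i) (fun _ => q g), if_pos (Finset.mem_univ _)]]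
    exact hq1
  have hmargmm : ∀ (i : L) (x : ∀ j, A j), marg q i (x i) = mm q {i} x := by
    intro i x
    rw [marg]
    exact marg_eq_mm q i x
  constructor
  · -- forward direction
    intro hF
    -- equilibrium identity, normalized
    have h0 : ∀ x, ∑ I : Finset L,
        c I * (mm p I x * mm p Iᶜ x - (∑ g : ∀ i, A i, p g) * p x) = 0 := by
      intro x
      have hx : recF c p x = 0 := by rw [hF]; rfl
      rw [recF_eq] at hx
      linarith
    have hA' : ∀ x, ∑ I : Finset L, c I * (mm p I x * mm p Iᶜ x)
        = (∑ I : Finset L, c I) * (σ * p x) := by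
      intro x
      have h1 := h0 x
      have h2 : ∑ I : Finset L,
          (c I * (mm p I x * mm p Iᶜ x) - c I * ((∑ g : ∀ i, A i, p g) * p x)) = 0 := by
        rw [← h1]
        exact Finset.sum_congr rfl fun I _ => by ring
      rw [Finset.sum_sub_distrib] at h2
      have h3 : ∑ I : Finset L, c I * ((∑ g : ∀ i, A i, p g) * p x)
          = (∑ I : Finset L, c I) * ((∑ g : ∀ i, A i, p g) * p x) :=
        (Finset.sum_mul univ c ((∑ g : ∀ i, A i, p g) * p x)).symm
      rw [h3, ← hσ] at h2
      linarith
    have heqx : ∀ x, ∑ I : Finset L, c I * (mm q I x * mm q Iᶜ x)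
        = (∑ I : Finset L, c I) * q x := by
      intro x
      have : ∑ I : Finset L, c I * (mm q I x * mm q Iᶜ x)
          = (∑ I : Finset L, c I * (mm p I x * mm p Iᶜ x)) / (σ * σ) := by
        rw [Finset.sum_div]
        refine Finset.sum_congr rfl fun I _ => ?_
        rw [hmmq, hmmq]
        field_simp
        try ring
      rw [this, hA' x, hqdef]
      field_simp
      try ring
    by_cases hsub : ∀ i j : L, i = j
    · -- single locus : conclusion holds unconditionally
      intro g
      obtain ⟨i₀⟩ := ‹Nonempty L›
      have hcard : n = 1 := by
        rw [hn]
        exact Fintype.card_eq_one_iff.2 ⟨i₀, fun y => hsub y i₀⟩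
      have hsub' : Subsingleton L := ⟨hsub⟩
      have hprod1 : (∏ i : L, marg p i (g i)) = marg p i₀ (g i₀) :=
        Fintype.prod_subsingleton _ i₀
      have hmargp : marg p i₀ (g i₀) = p g := by
        rw [marg]
        have key : ∀ h : ∀ j, A j, (if h i₀ = g i₀ then p h else 0)
            = if h = g then p h else 0 := by
          intro h
          refine if_congr ?_ rfl rfl
          constructor
          · intro hh
            funext j
            have hj : j = i₀ := hsub j i₀
            subst hj
            exact hh
          · intro hh; rw [hh]
        rw [Finset.sum_congr rfl fun h _ => key h,
          Finset.sum_ite_eq' univ g p, if_pos (Finset.mem_univ g)]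
      rw [hprod1, hmargp, hcard]
      norm_num
    · -- at least two loci
      push_neg at hsub
      have hgood : ∀ I : Finset L, 0 < c I → good q I := by
        intro I hI
        exact good_of_equilibrium hq0 hq1 c hc heqx hI
      have hpair : ∀ i : L, ∀ j : L, j ≠ i →
          ∃ S : Finset L, good q S ∧ i ∈ S ∧ j ∉ S := by
        intro i j hji
        have hij : i ≠ j := fun h => hji h.symm
        have hpos := hsep i j hij
        obtain ⟨I, hIf, hIpos⟩ : ∃ I ∈ univ.filter
            (fun I : Finset L => i ∈ I ∧ j ∉ I), 0 < c I := by
          by_contra hno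
          push_neg at hno
          have : ∑ I ∈ univ.filter (fun I : Finset L => i ∈ I ∧ j ∉ I), c I ≤ 0 :=
            Finset.sum_nonpos fun I hI => hno I hI
          linarith
        have hm := Finset.mem_filter.1 hIf
        exact ⟨I, hgood I hIpos, hm.2.1, hm.2.2⟩
      have hgs : ∀ i : L, good q ({i} : Finset L) :=
        fun i => good_singleton hq1 i (hpair i)
      have hqprod := prod_form_of_good_singletons hq1 hgs
      refine equivForm.2 ?_
      intro g
      rw [hqprod g]
      exact Finset.prod_congr rfl fun i _ => (hmargmm i g).symm
  · -- backward direction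
    intro hprod
    have hqform : ∀ g : ∀ i, A i, q g = ∏ i : L, marg q i (g i) := equivForm.1 hprod
    have hmmpf : ∀ (S : Finset L) (x : ∀ i, A i),
        mm q S x = ∏ i ∈ S, marg q i (x i) :=
      mm_prod_form (fun i => marg q i) hmarg1 hqform
    have hterm : ∀ (I : Finset L) (x : ∀ i, A i),
        mm p I x * mm p Iᶜ x = (∑ g : ∀ i, A i, p g) * p x := by
      intro I x
      have h1 : mm q I x * mm q Iᶜ x = q x := by
        rw [hmmpf I x, hmmpf Iᶜ x, Finset.prod_mul_prod_compl, ← hqform x]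
      have h2 : mm p I x = σ * mm q I x := by rw [hmmq]; field_simp
      have h3 : mm p Iᶜ x = σ * mm q Iᶜ x := by rw [hmmq]; field_simp
      rw [h2, h3, ← hσ]
      calc σ * mm q I x * (σ * mm q Iᶜ x) = σ * σ * (mm q I x * mm q Iᶜ x) := by ring
        _ = σ * σ * q x := by rw [h1]
        _ = σ * p x := by rw [hqdef]; field_simp
    funext x
    rw [recF_eq]
    have : ∑ I : Finset L,
        c I * (mm p I x * mm p Iᶜ x - (∑ g : ∀ i, A i, p g) * p x) = 0 :=
      Finset.sum_eq_zero fun I _ => by rw [hterm I x]; ring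
    rw [this]
    simp
end

section
/- Under the standing assumption, every equilibrium p ∈ S_𝓖 of the recombination dynamics is detailed-balancing: p(g)·p(h) = p(g_I h_J)·p(g_J h_I) for all gametes g,h ∈ 𝓖 and all recombination patterns {I,J} ∈ 𝓟. -/
open Finset

set_option linter.unusedSectionVars false

/-! ### Auxiliary entropy lemmas -/

/-- Gibbs' inequality with equality case. -/
lemma gibbs (α : Type) [Fintype α] (p q : α → ℝ) (hp0 : ∀ x, 0 ≤ p x) (hq0 : ∀ x, 0 ≤ q x)
    (hp1 : ∑ x, p x = 1) (hq1 : ∑ x, q x = 1) (habs : ∀ x, q x = 0 → p x = 0) :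
    ∑ x, p x * Real.log (q x) ≤ ∑ x, p x * Real.log (p x) ∧
    ((∑ x, p x * Real.log (q x) = ∑ x, p x * Real.log (p x)) → p = q) := by
  set t : α → ℝ := fun x => (q x - p x) - (p x * Real.log (q x) - p x * Real.log (p x)) with ht
  have key : ∀ x, 0 ≤ t x := by
    intro x
    rcases eq_or_lt_of_le (hp0 x) with h | h
    · simp [ht, ← h, hq0 x]
    · have hq : 0 < q x := by
        rcases eq_or_lt_of_le (hq0 x) with h' | h'
        · exact absurd (habs x h'.symm) (by linarith)
        · exact h'
      have hlog : Real.log (q x / p x) ≤ q x / p x - 1 :=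
        Real.log_le_sub_one_of_pos (div_pos hq h)
      have hld : Real.log (q x / p x) = Real.log (q x) - Real.log (p x) :=
        Real.log_div (ne_of_gt hq) (ne_of_gt h)
      rw [hld] at hlog
      have h2 : p x * (Real.log (q x) - Real.log (p x)) ≤ p x * (q x / p x - 1) :=
        mul_le_mul_of_nonneg_left hlog (le_of_lt h)
      have h3 : p x * (q x / p x - 1) = q x - p x := by field_simp
      simp only [ht]; nlinarith
  have hsum : ∑ x, t x = ∑ x, p x * Real.log (p x) - ∑ x, p x * Real.log (q x) := by
    simp only [ht, Finset.sum_sub_distrib, hp1, hq1]; ring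
  have hle : ∑ x, p x * Real.log (q x) ≤ ∑ x, p x * Real.log (p x) := by
    have h4 : (0:ℝ) ≤ ∑ x, t x := Finset.sum_nonneg (fun x _ => key x)
    linarith [hsum ▸ h4]
  refine ⟨hle, fun heq => ?_⟩
  have hz : ∀ x ∈ Finset.univ, t x = 0 := by
    rw [← Finset.sum_eq_zero_iff_of_nonneg (fun x _ => key x)]
    rw [hsum, heq]; ring
  funext x
  have hzx := hz x (mem_univ x)
  rcases eq_or_lt_of_le (hp0 x) with h | h
  · have : q x = 0 := by simp [ht, ← h] at hzx; linarith
    rw [← h, this]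
  · have hq : 0 < q x := by
      rcases eq_or_lt_of_le (hq0 x) with h' | h'
      · exact absurd (habs x h'.symm) (by linarith)
      · exact h'
    by_contra hne
    have hne1 : q x / p x ≠ 1 := by
      intro hcon
      exact hne (by field_simp at hcon; linarith)
    have hlog : Real.log (q x / p x) < q x / p x - 1 :=
      Real.log_lt_sub_one_of_pos (div_pos hq h) hne1
    have hld : Real.log (q x / p x) = Real.log (q x) - Real.log (p x) :=
      Real.log_div (ne_of_gt hq) (ne_of_gt h)
    rw [hld] at hlog
    have h2 : p x * (Real.log (q x) - Real.log (p x)) < p x * (q x / p x - 1) :=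
      mul_lt_mul_of_pos_left hlog h
    have h3 : p x * (q x / p x - 1) = q x - p x := by field_simp
    simp only [ht] at hzx; nlinarith

/-- Entropy subadditivity (with equality case) on a binary product. -/
lemma entropy_prod {β γ : Type} [Fintype β] [Fintype γ] (p : β × γ → ℝ)
    (hp0 : ∀ x, 0 ≤ p x) (hp1 : ∑ x, p x = 1)
    (q : β × γ → ℝ) (hq : ∀ x, q x = (∑ c, p (x.1, c)) * (∑ b, p (b, x.2))) :
    (∑ x, q x * Real.log (q x) ≤ ∑ x, p x * Real.log (p x)) ∧
    ((∑ x, q x * Real.log (q x) = ∑ x, p x * Real.log (p x)) → p = q) := by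
  set u : β → ℝ := fun b => ∑ c, p (b, c) with hu
  set v : γ → ℝ := fun c => ∑ b, p (b, c) with hv
  have hu0 : ∀ b, 0 ≤ u b := fun b => Finset.sum_nonneg (fun c _ => hp0 _)
  have hv0 : ∀ c, 0 ≤ v c := fun c => Finset.sum_nonneg (fun b _ => hp0 _)
  have hu1 : ∑ b, u b = 1 := by rw [← hp1, Fintype.sum_prod_type]
  have hv1 : ∑ c, v c = 1 := by rw [← hp1, Fintype.sum_prod_type_right]
  have hq0 : ∀ x, 0 ≤ q x := fun x => (hq x) ▸ mul_nonneg (hu0 _) (hv0 _)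
  have hq1 : ∑ x, q x = 1 := by
    have : ∑ x : β × γ, q x = (∑ b, u b) * (∑ c, v c) := by
      rw [Finset.sum_mul_sum, Fintype.sum_prod_type]
      exact Finset.sum_congr rfl fun b _ => Finset.sum_congr rfl fun c _ => hq (b, c)
    rw [this, hu1, hv1, one_mul]
  have hple_u : ∀ x : β × γ, p x ≤ u x.1 := by
    intro x
    exact Finset.single_le_sum (f := fun c => p (x.1, c)) (fun c _ => hp0 _) (mem_univ x.2)
  have hple_v : ∀ x : β × γ, p x ≤ v x.2 := by
    intro x
    exact Finset.single_le_sum (f := fun b => p (b, x.2)) (fun b _ => hp0 _) (mem_univ x.1)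
  have habs : ∀ x, q x = 0 → p x = 0 := by
    intro x hx
    rw [hq x] at hx
    rcases mul_eq_zero.mp hx with h | h
    · exact le_antisymm (h ▸ hple_u x) (hp0 x)
    · exact le_antisymm (h ▸ hple_v x) (hp0 x)
  have hquv : ∀ x : β × γ, q x = u x.1 * v x.2 := fun x => hq x
  have hkey : ∑ x, p x * Real.log (q x) = ∑ x, q x * Real.log (q x) := by
    have e1 : ∀ x : β × γ, p x * Real.log (q x)
        = p x * Real.log (u x.1) + p x * Real.log (v x.2) := by
      intro x
      rcases eq_or_lt_of_le (hp0 x) with h | h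
      · rw [← h]; ring
      · have hub : 0 < u x.1 := lt_of_lt_of_le h (hple_u x)
        have hvb : 0 < v x.2 := lt_of_lt_of_le h (hple_v x)
        rw [hquv x, Real.log_mul (ne_of_gt hub) (ne_of_gt hvb)]; ring
    have e2 : ∀ x : β × γ, q x * Real.log (q x)
        = (u x.1 * Real.log (u x.1)) * v x.2 + u x.1 * (v x.2 * Real.log (v x.2)) := by
      intro x
      rcases eq_or_lt_of_le (hu0 x.1) with h | h
      · rw [hquv x, show u x.1 = 0 from h.symm]; simp
      rcases eq_or_lt_of_le (hv0 x.2) with h' | h'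
      · rw [hquv x, show v x.2 = 0 from h'.symm]; simp
      rw [hquv x, Real.log_mul (ne_of_gt h) (ne_of_gt h')]; ring
    have su : ∑ x : β × γ, p x * Real.log (u x.1) = ∑ b, u b * Real.log (u b) := by
      have h1 : ∑ x : β × γ, p x * Real.log (u x.1)
          = ∑ b, ∑ c, p (b, c) * Real.log (u b) :=
        Fintype.sum_prod_type (f := fun x : β × γ => p x * Real.log (u x.1))
      rw [h1]
      exact Finset.sum_congr rfl fun b _ => by rw [← Finset.sum_mul]
    have sv : ∑ x : β × γ, p x * Real.log (v x.2) = ∑ c, v c * Real.log (v c) := by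
      have h1 : ∑ x : β × γ, p x * Real.log (v x.2)
          = ∑ c, ∑ b, p (b, c) * Real.log (v c) :=
        Fintype.sum_prod_type_right (f := fun x : β × γ => p x * Real.log (v x.2))
      rw [h1]
      exact Finset.sum_congr rfl fun c _ => by rw [← Finset.sum_mul]
    have lhs : ∑ x, p x * Real.log (q x)
        = ∑ b, u b * Real.log (u b) + ∑ c, v c * Real.log (v c) := by
      rw [← su, ← sv, ← Finset.sum_add_distrib]
      exact Finset.sum_congr rfl fun x _ => e1 x
    have rhs : ∑ x, q x * Real.log (q x)
        = ∑ b, u b * Real.log (u b) + ∑ c, v c * Real.log (v c) := by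
      have r1 : ∑ x : β × γ, (u x.1 * Real.log (u x.1)) * v x.2
          = ∑ b, u b * Real.log (u b) := by
        have h1 : ∑ x : β × γ, (u x.1 * Real.log (u x.1)) * v x.2
            = ∑ b, ∑ c, (u b * Real.log (u b)) * v c :=
          Fintype.sum_prod_type (f := fun x : β × γ => (u x.1 * Real.log (u x.1)) * v x.2)
        rw [h1]
        have h2 : ∀ b, ∑ c, (u b * Real.log (u b)) * v c = u b * Real.log (u b) := by
          intro b; rw [← Finset.mul_sum, hv1, mul_one]
        exact Finset.sum_congr rfl fun b _ => h2 b
      have r2 : ∑ x : β × γ, u x.1 * (v x.2 * Real.log (v x.2))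
          = ∑ c, v c * Real.log (v c) := by
        have h1 : ∑ x : β × γ, u x.1 * (v x.2 * Real.log (v x.2))
            = ∑ c, ∑ b, u b * (v c * Real.log (v c)) :=
          Fintype.sum_prod_type_right (f := fun x : β × γ => u x.1 * (v x.2 * Real.log (v x.2)))
        rw [h1]
        have h2 : ∀ c, ∑ b, u b * (v c * Real.log (v c)) = v c * Real.log (v c) := by
          intro c; rw [← Finset.sum_mul, hu1, one_mul]
        exact Finset.sum_congr rfl fun c _ => h2 c
      rw [← r1, ← r2, ← Finset.sum_add_distrib]
      exact Finset.sum_congr rfl fun x _ => e2 x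
    rw [lhs, rhs]
  obtain ⟨hle, heqc⟩ := gibbs (β × γ) p q hp0 hq0 hp1 hq1 habs
  rw [hkey] at hle heqc
  exact ⟨hle, heqc⟩

/-! ### Marginal machinery -/

section Mrg
variable {L : Type} [Fintype L] [DecidableEq L] {A : L → Type}
    [∀ i, Fintype (A i)] [∀ i, DecidableEq (A i)]

/-- Marginal sum of `p` over configurations agreeing with `x` on `I`. -/
noncomputable def mrg (p : (∀ i, A i) → ℝ) (I : Finset L) (x : ∀ i, A i) : ℝ :=
  ∑ g : ∀ i, A i, if ∀ i ∈ I, g i = x i then p g else 0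

lemma mrg_nonneg {p : (∀ i, A i) → ℝ} (hp0 : ∀ g, 0 ≤ p g) (I : Finset L) (x : ∀ i, A i) :
    0 ≤ mrg p I x := by
  refine Finset.sum_nonneg fun g _ => ?_
  split <;> simp [hp0]

lemma mrg_empty (p : (∀ i, A i) → ℝ) (x : ∀ i, A i) :
    mrg p (∅ : Finset L) x = ∑ g : ∀ i, A i, p g := by
  unfold mrg
  exact Finset.sum_congr rfl fun g _ => by simp

lemma mrg_univ (p : (∀ i, A i) → ℝ) (x : ∀ i, A i) :
    mrg p (univ : Finset L) x = p x := by
  unfold mrg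
  have h : ∀ g : ∀ i, A i, (∀ i ∈ (univ : Finset L), g i = x i) ↔ g = x := by
    intro g; simp [funext_iff]
  rw [Finset.sum_congr rfl (fun g _ => if_congr (h g) rfl rfl)]
  simp

lemma mrg_congr (p : (∀ i, A i) → ℝ) (I : Finset L) {x y : ∀ i, A i}
    (hxy : ∀ i ∈ I, y i = x i) : mrg p I y = mrg p I x := by
  unfold mrg
  refine Finset.sum_congr rfl fun g _ => if_congr ?_ rfl rfl
  constructor
  · intro hg i hi; rw [← hxy i hi]; exact hg i hi
  · intro hg i hi; rw [hxy i hi]; exact hg i hi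

lemma le_mrg (p : (∀ i, A i) → ℝ) (hp0 : ∀ g, 0 ≤ p g) (I : Finset L) (x : ∀ i, A i) :
    p x ≤ mrg p I x := by
  unfold mrg
  have h : (if ∀ i ∈ I, x i = x i then p x else 0) = p x := if_pos (fun i _ => rfl)
  calc p x = if ∀ i ∈ I, x i = x i then p x else 0 := h.symm
    _ ≤ _ := Finset.single_le_sum (f := fun g => if ∀ i ∈ I, g i = x i then p g else 0)
        (fun g _ => by split <;> simp [hp0]) (mem_univ x)

/-- Marginalizing a marginal. -/
lemma mrg_marg (p : (∀ i, A i) → ℝ) (U W : Finset L) (hUW : U ∪ W = univ) (x : ∀ i, A i) :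
    ∑ g : ∀ i, A i, (if ∀ i ∈ U, g i = x i then mrg p W g else 0) = mrg p (U ∩ W) x := by
  have step1 : ∀ g : ∀ i, A i, (if ∀ i ∈ U, g i = x i then mrg p W g else 0)
      = ∑ h : ∀ i, A i, if (∀ i ∈ U, g i = x i) ∧ (∀ i ∈ W, h i = g i) then p h else 0 := by
    intro g
    by_cases hg : ∀ i ∈ U, g i = x i
    · rw [if_pos hg]; unfold mrg
      exact Finset.sum_congr rfl fun h _ => if_congr (by tauto) rfl rfl
    · rw [if_neg hg]
      exact (Finset.sum_eq_zero fun h _ => if_neg (by tauto)).symm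
  rw [Finset.sum_congr rfl fun g _ => step1 g, Finset.sum_comm]
  unfold mrg
  refine Finset.sum_congr rfl fun h _ => ?_
  by_cases hcons : ∀ i ∈ U ∩ W, h i = x i
  · rw [if_pos hcons]
    rw [Finset.sum_eq_single (recomb U x h)]
    · rw [if_pos]
      constructor
      · intro i hi; simp [recomb, hi]
      · intro i hi
        by_cases hiU : i ∈ U
        · simp only [recomb, if_pos hiU]
          exact hcons i (Finset.mem_inter.mpr ⟨hiU, hi⟩)
        · simp [recomb, hiU]
    · intro g _ hne
      refine if_neg fun hcon => hne ?_
      funext i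
      by_cases hiU : i ∈ U
      · simp only [recomb, if_pos hiU]; exact hcon.1 i hiU
      · have hiW : i ∈ W := by
          have : i ∈ U ∪ W := hUW ▸ Finset.mem_univ i
          rcases Finset.mem_union.mp this with h' | h'
          · exact absurd h' hiU
          · exact h'
        simp only [recomb, if_neg hiU]
        exact (hcon.2 i hiW).symm
    · intro hnm; exact absurd (Finset.mem_univ _) hnm
  · rw [if_neg hcons]
    refine Finset.sum_eq_zero fun g _ => if_neg fun hcon => hcons fun i hi => ?_
    have hiU := Finset.mem_inter.mp hi
    rw [hcon.2 i hiU.2, hcon.1 i hiU.1]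

/-- If `p` splits along `{K, Kᶜ}`, any marginal over `W ⊇ K` factorizes. -/
lemma mrg_split (p : (∀ i, A i) → ℝ) (K W : Finset L)
    (hsplit : ∀ y, p y = mrg p K y * mrg p Kᶜ y) (hKW : K ⊆ W) (x : ∀ i, A i) :
    mrg p W x = mrg p K x * mrg p (W \ K) x := by
  have e1 : mrg p W x = ∑ g : ∀ i, A i,
      (if ∀ i ∈ W, g i = x i then mrg p K x * mrg p Kᶜ g else 0) := by
    rw [show mrg p W x = ∑ g : ∀ i, A i, if ∀ i ∈ W, g i = x i then p g else 0 from rfl]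
    refine Finset.sum_congr rfl fun g _ => ?_
    by_cases hg : ∀ i ∈ W, g i = x i
    · rw [if_pos hg, if_pos hg, hsplit g, mrg_congr p K (fun i hi => hg i (hKW hi))]
    · rw [if_neg hg, if_neg hg]
  rw [e1]
  have e2 : ∀ g : ∀ i, A i, (if ∀ i ∈ W, g i = x i then mrg p K x * mrg p Kᶜ g else 0)
      = mrg p K x * (if ∀ i ∈ W, g i = x i then mrg p Kᶜ g else 0) := by
    intro g; split <;> simp
  rw [Finset.sum_congr rfl fun g _ => e2 g, ← Finset.mul_sum]
  have hu : W ∪ Kᶜ = univ := by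
    rw [Finset.eq_univ_iff_forall]
    intro i
    by_cases hiK : i ∈ K
    · exact Finset.mem_union.mpr (Or.inl (hKW hiK))
    · exact Finset.mem_union.mpr (Or.inr (Finset.mem_compl.mpr hiK))
  rw [mrg_marg p W Kᶜ hu x]
  have hWK : W ∩ Kᶜ = W \ K := by ext i; simp [Finset.mem_sdiff]
  rw [hWK]

lemma splits_compl (p : (∀ i, A i) → ℝ) (K : Finset L)
    (hK : ∀ x, p x = mrg p K x * mrg p Kᶜ x) :
    ∀ x, p x = mrg p Kᶜ x * mrg p Kᶜᶜ x := by
  intro x; rw [compl_compl, hK x]; ring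

lemma splits_inter (p : (∀ i, A i) → ℝ) (I J : Finset L)
    (hI : ∀ x, p x = mrg p I x * mrg p Iᶜ x)
    (hJ : ∀ x, p x = mrg p J x * mrg p Jᶜ x) :
    ∀ x, p x = mrg p (I ∩ J) x * mrg p (I ∩ J)ᶜ x := by
  intro x
  have hIJg : ∀ g, mrg p (I ∪ J) g = mrg p I g * mrg p ((I ∪ J) \ I) g :=
    fun g => mrg_split p I (I ∪ J) hI Finset.subset_union_left g
  have hU1 : (Iᶜ ∪ J) ∪ (I ∪ J) = univ := by
    ext i; simp only [Finset.mem_union, Finset.mem_compl, Finset.mem_univ, iff_true]; tauto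
  have hUI : (Iᶜ ∪ J) ∪ I = univ := by
    ext i; simp only [Finset.mem_union, Finset.mem_compl, Finset.mem_univ, iff_true]; tauto
  have e0 : (Iᶜ ∪ J) ∩ (I ∪ J) = J := by
    ext i; simp only [Finset.mem_inter, Finset.mem_union, Finset.mem_compl]; tauto
  have e1 : (Iᶜ ∪ J) ∩ I = I ∩ J := by
    ext i; simp only [Finset.mem_inter, Finset.mem_union, Finset.mem_compl]; tauto
  have eJI : (I ∪ J) \ I = J \ I := by
    ext i; simp only [Finset.mem_sdiff, Finset.mem_union]; tauto
  have key : mrg p J x = mrg p (I ∩ J) x * mrg p (J \ I) x := by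
    have h1 : mrg p J x
        = ∑ g : ∀ i, A i, (if ∀ i ∈ Iᶜ ∪ J, g i = x i then mrg p (I ∪ J) g else 0) := by
      rw [mrg_marg p (Iᶜ ∪ J) (I ∪ J) hU1 x, e0]
    have h2 : ∀ g : ∀ i, A i, (if ∀ i ∈ Iᶜ ∪ J, g i = x i then mrg p (I ∪ J) g else 0)
        = mrg p ((I ∪ J) \ I) x * (if ∀ i ∈ Iᶜ ∪ J, g i = x i then mrg p I g else 0) := by
      intro g
      by_cases hg : ∀ i ∈ Iᶜ ∪ J, g i = x i
      · have hsub : ∀ i ∈ (I ∪ J) \ I, i ∈ Iᶜ ∪ J := by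
          intro i hi
          simp only [Finset.mem_sdiff, Finset.mem_union] at hi
          simp only [Finset.mem_union, Finset.mem_compl]
          tauto
        rw [if_pos hg, if_pos hg, hIJg g,
          mrg_congr p ((I ∪ J) \ I) (fun i hi => hg i (hsub i hi))]
        ring
      · rw [if_neg hg, if_neg hg]; ring
    rw [h1, Finset.sum_congr rfl fun g _ => h2 g, ← Finset.mul_sum,
      mrg_marg p (Iᶜ ∪ J) I hUI x, e1, eJI]
    ring
  have hJc : ∀ y, p y = mrg p Jᶜ y * mrg p Jᶜᶜ y := splits_compl p J hJ
  have hsubc : Jᶜ ⊆ (I ∩ J)ᶜ := Finset.compl_subset_compl.mpr Finset.inter_subset_right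
  have hcsplit : mrg p (I ∩ J)ᶜ x = mrg p Jᶜ x * mrg p ((I ∩ J)ᶜ \ Jᶜ) x :=
    mrg_split p Jᶜ (I ∩ J)ᶜ hJc hsubc x
  have e2 : (I ∩ J)ᶜ \ Jᶜ = J \ I := by
    ext i
    simp only [Finset.mem_sdiff, Finset.mem_compl, Finset.mem_inter]
    tauto
  rw [hJ x, key, hcsplit, e2]
  ring

end Mrg

section Step1
variable {L : Type} [Fintype L] [DecidableEq L] {A : L → Type}
    [∀ i, Fintype (A i)] [∀ i, DecidableEq (A i)]

lemma recomb_eq_iff (K : Finset L) (g h x : ∀ i, A i) :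
    x = recomb K g h ↔ (∀ i ∈ K, g i = x i) ∧ (∀ i ∈ Kᶜ, h i = x i) := by
  constructor
  · intro he
    subst he
    constructor
    · intro i hi; simp [recomb, hi]
    · intro i hi
      rw [Finset.mem_compl] at hi
      simp [recomb, hi]
  · rintro ⟨h1, h2⟩
    funext i
    by_cases hi : i ∈ K
    · simp only [recomb, if_pos hi]; exact (h1 i hi).symm
    · simp only [recomb, if_neg hi]
      exact (h2 i (Finset.mem_compl.mpr hi)).symm

lemma sum_mul_ite_factor (p : (∀ i, A i) → ℝ) (c0 : ℝ)
    (P Q : (∀ i, A i) → Prop) [DecidablePred P] [DecidablePred Q] :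
    ∑ g : ∀ i, A i, ∑ h : ∀ i, A i,
      c0 * p g * p h * ((if P g then (1:ℝ) else 0) * (if Q h then (1:ℝ) else 0))
    = c0 * ((∑ g : ∀ i, A i, if P g then p g else 0) * (∑ h : ∀ i, A i, if Q h then p h else 0)) := by
  have step : ∀ g : ∀ i, A i, ∑ h : ∀ i, A i,
      c0 * p g * p h * ((if P g then (1:ℝ) else 0) * (if Q h then (1:ℝ) else 0))
      = (c0 * (if P g then p g else 0)) * (∑ h : ∀ i, A i, if Q h then p h else 0) := by
    intro g
    rw [Finset.mul_sum]
    refine Finset.sum_congr rfl fun h _ => ?_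
    by_cases hP : P g <;> by_cases hQ : Q h <;> simp [hP, hQ] <;> ring
  rw [Finset.sum_congr rfl fun g _ => step g, ← Finset.sum_mul, ← Finset.mul_sum]
  ring

lemma equilibrium_identity (c : Finset L → ℝ) (p : (∀ i, A i) → ℝ)
    (hp1 : ∑ g : ∀ i, A i, p g = 1) (heq : recF c p = 0) (x : ∀ i, A i) :
    (∑ I : Finset L, c I) * p x = ∑ I : Finset L, c I * (mrg p I x * mrg p Iᶜ x) := by
  have h0 : recF c p x = 0 := by rw [heq]; rfl
  unfold recF at h0
  rw [mul_eq_zero] at h0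
  rcases h0 with h0 | h0
  · norm_num at h0
  -- split the big sum into four parts
  have hsplit : ∀ (g h : ∀ i, A i) (I : Finset L),
      c I * p g * p h *
      ((if x = recomb I g h then (1:ℝ) else 0) + (if x = recomb Iᶜ g h then 1 else 0)
        - (if x = g then 1 else 0) - (if x = h then 1 else 0))
      = c I * p g * p h * (if x = recomb I g h then (1:ℝ) else 0)
        + c I * p g * p h * (if x = recomb Iᶜ g h then (1:ℝ) else 0)
        - c I * p g * p h * (if x = g then (1:ℝ) else 0)
        - c I * p g * p h * (if x = h then (1:ℝ) else 0) := by
    intro g h I; ring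
  rw [Finset.sum_congr rfl fun g _ => Finset.sum_congr rfl fun h _ =>
    Finset.sum_congr rfl fun I _ => hsplit g h I] at h0
  simp only [Finset.sum_sub_distrib, Finset.sum_add_distrib] at h0
  -- part 3 : ∑∑∑ c I p g p h [x = g] = C p x
  have key3 : ∑ g : ∀ i, A i, ∑ h : ∀ i, A i, ∑ I : Finset L,
      c I * p g * p h * (if x = g then (1:ℝ) else 0)
      = (∑ I : Finset L, c I) * p x := by
    rw [Finset.sum_eq_single x]
    · have inner : ∀ h : ∀ i, A i, ∑ I : Finset L,
          c I * p x * p h * (if x = x then (1:ℝ) else 0)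
          = (∑ I : Finset L, c I) * (p x * p h) := by
        intro h
        rw [Finset.sum_mul]
        exact Finset.sum_congr rfl fun I _ => by rw [if_pos rfl]; ring
      rw [Finset.sum_congr rfl fun h _ => inner h, ← Finset.mul_sum, ← Finset.mul_sum, hp1,
        mul_one]
    · intro g _ hgx
      refine Finset.sum_eq_zero fun h _ => Finset.sum_eq_zero fun I _ => ?_
      rw [if_neg (fun he => hgx he.symm)]; ring
    · intro hx; exact absurd (Finset.mem_univ x) hx
  -- part 4 : ∑∑∑ c I p g p h [x = h] = C p x
  have key4 : ∑ g : ∀ i, A i, ∑ h : ∀ i, A i, ∑ I : Finset L,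
      c I * p g * p h * (if x = h then (1:ℝ) else 0)
      = (∑ I : Finset L, c I) * p x := by
    have inner : ∀ g : ∀ i, A i, ∑ h : ∀ i, A i, ∑ I : Finset L,
        c I * p g * p h * (if x = h then (1:ℝ) else 0)
        = (∑ I : Finset L, c I) * (p g * p x) := by
      intro g
      rw [Finset.sum_eq_single x]
      · rw [Finset.sum_mul]
        exact Finset.sum_congr rfl fun I _ => by rw [if_pos rfl]; ring
      · intro h _ hhx
        refine Finset.sum_eq_zero fun I _ => ?_
        rw [if_neg (fun he => hhx he.symm)]; ring
      · intro hx; exact absurd (Finset.mem_univ x) hx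
    rw [Finset.sum_congr rfl fun g _ => inner g, ← Finset.mul_sum, ← Finset.sum_mul, hp1,
      one_mul]
  -- part 1 : recomb I
  have ite_split : ∀ (K : Finset L) (g h : ∀ i, A i),
      (if x = recomb K g h then (1:ℝ) else 0)
      = (if ∀ i ∈ K, g i = x i then (1:ℝ) else 0) * (if ∀ i ∈ Kᶜ, h i = x i then (1:ℝ) else 0) := by
    intro K g h
    have hiff := recomb_eq_iff K g h x
    by_cases h1 : ∀ i ∈ K, g i = x i
    · by_cases h2 : ∀ i ∈ Kᶜ, h i = x i
      · rw [if_pos (hiff.mpr ⟨h1, h2⟩), if_pos h1, if_pos h2]; norm_num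
      · rw [if_neg (fun hc => h2 (hiff.mp hc).2), if_pos h1, if_neg h2]; norm_num
    · rw [if_neg (fun hc => h1 (hiff.mp hc).1), if_neg h1]; norm_num
  have keyK : ∀ K : Finset L, ∀ cK : ℝ, ∑ g : ∀ i, A i, ∑ h : ∀ i, A i,
      cK * p g * p h * (if x = recomb K g h then (1:ℝ) else 0)
      = cK * (mrg p K x * mrg p Kᶜ x) := by
    intro K cK
    rw [Finset.sum_congr rfl fun g _ => Finset.sum_congr rfl fun h _ => by
      rw [ite_split K g h]]
    exact sum_mul_ite_factor p cK _ _
  have key1 : ∑ g : ∀ i, A i, ∑ h : ∀ i, A i, ∑ I : Finset L,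
      c I * p g * p h * (if x = recomb I g h then (1:ℝ) else 0)
      = ∑ I : Finset L, c I * (mrg p I x * mrg p Iᶜ x) := by
    rw [Finset.sum_congr rfl fun g (_ : g ∈ univ) =>
      (Finset.sum_comm (s := univ) (t := univ)
        (f := fun h I => c I * p g * p h * (if x = recomb I g h then (1:ℝ) else 0))),
      Finset.sum_comm]
    exact Finset.sum_congr rfl fun I _ => keyK I (c I)
  have key2 : ∑ g : ∀ i, A i, ∑ h : ∀ i, A i, ∑ I : Finset L,
      c I * p g * p h * (if x = recomb Iᶜ g h then (1:ℝ) else 0)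
      = ∑ I : Finset L, c I * (mrg p I x * mrg p Iᶜ x) := by
    rw [Finset.sum_congr rfl fun g (_ : g ∈ univ) =>
      (Finset.sum_comm (s := univ) (t := univ)
        (f := fun h I => c I * p g * p h * (if x = recomb Iᶜ g h then (1:ℝ) else 0))),
      Finset.sum_comm]
    refine Finset.sum_congr rfl fun I _ => ?_
    rw [keyK Iᶜ (c I), compl_compl]
    ring
  rw [key1, key2, key3, key4] at h0
  linarith
end Step1

section Transfer
variable {L : Type} [Fintype L] [DecidableEq L] {A : L → Type}
    [∀ i, Fintype (A i)] [∀ i, DecidableEq (A i)]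

lemma mrg_transfer (p : (∀ i, A i) → ℝ) (I : Finset L) (x : ∀ i, A i) :
    mrg p I x = ∑ z : ∀ i : {i // ¬ i ∈ I}, A i,
      p ((Equiv.piEquivPiSubtypeProd (fun i => i ∈ I) A).symm
        (((Equiv.piEquivPiSubtypeProd (fun i => i ∈ I) A) x).1, z)) := by
  set e := Equiv.piEquivPiSubtypeProd (fun i => i ∈ I) A with he
  have h1 : mrg p I x = ∑ y : (∀ i : {i // i ∈ I}, A i) × (∀ i : {i // ¬ i ∈ I}, A i),
      (if ∀ i ∈ I, (e.symm y) i = x i then p (e.symm y) else 0) :=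
    (Equiv.sum_comp e.symm (fun g => if ∀ i ∈ I, g i = x i then p g else 0)).symm
  rw [h1]
  have h2 : ∑ y : (∀ i : {i // i ∈ I}, A i) × (∀ i : {i // ¬ i ∈ I}, A i),
      (if ∀ i ∈ I, (e.symm y) i = x i then p (e.symm y) else 0)
      = ∑ b : ∀ i : {i // i ∈ I}, A i, ∑ z : ∀ i : {i // ¬ i ∈ I}, A i,
      (if ∀ i ∈ I, (e.symm (b, z)) i = x i then p (e.symm (b, z)) else 0) :=
    Fintype.sum_prod_type
      (f := fun y => if ∀ i ∈ I, (e.symm y) i = x i then p (e.symm y) else 0)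
  rw [h2]
  have hcond : ∀ (b : ∀ i : {i // i ∈ I}, A i) (z : ∀ i : {i // ¬ i ∈ I}, A i),
      (∀ i ∈ I, (e.symm (b, z)) i = x i) ↔ b = (e x).1 := by
    intro b z
    constructor
    · intro hb
      funext j
      have := hb j.1 j.2
      rw [show (e.symm (b, z)) j.1 = b j from by
        simp [he, Equiv.piEquivPiSubtypeProd, dif_pos j.2]] at this
      exact this
    · intro hb i hi
      rw [show (e.symm (b, z)) i = b ⟨i, hi⟩ from by
        simp [he, Equiv.piEquivPiSubtypeProd, dif_pos hi], hb]
      simp [he, Equiv.piEquivPiSubtypeProd]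
  rw [Finset.sum_eq_single ((e x).1)]
  · refine Finset.sum_congr rfl fun z _ => ?_
    rw [if_pos ((hcond _ z).mpr rfl)]
  · intro b _ hb
    refine Finset.sum_eq_zero fun z _ => if_neg fun hcon => hb ((hcond b z).mp hcon)
  · intro hx; exact absurd (Finset.mem_univ _) hx

lemma mrg_transfer_c (p : (∀ i, A i) → ℝ) (I : Finset L) (x : ∀ i, A i) :
    mrg p Iᶜ x = ∑ b : ∀ i : {i // i ∈ I}, A i,
      p ((Equiv.piEquivPiSubtypeProd (fun i => i ∈ I) A).symm
        (b, ((Equiv.piEquivPiSubtypeProd (fun i => i ∈ I) A) x).2)) := by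
  set e := Equiv.piEquivPiSubtypeProd (fun i => i ∈ I) A with he
  have h1 : mrg p Iᶜ x = ∑ y : (∀ i : {i // i ∈ I}, A i) × (∀ i : {i // ¬ i ∈ I}, A i),
      (if ∀ i ∈ Iᶜ, (e.symm y) i = x i then p (e.symm y) else 0) :=
    (Equiv.sum_comp e.symm (fun g => if ∀ i ∈ Iᶜ, g i = x i then p g else 0)).symm
  rw [h1]
  have h2 : ∑ y : (∀ i : {i // i ∈ I}, A i) × (∀ i : {i // ¬ i ∈ I}, A i),
      (if ∀ i ∈ Iᶜ, (e.symm y) i = x i then p (e.symm y) else 0)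
      = ∑ z : ∀ i : {i // ¬ i ∈ I}, A i, ∑ b : ∀ i : {i // i ∈ I}, A i,
      (if ∀ i ∈ Iᶜ, (e.symm (b, z)) i = x i then p (e.symm (b, z)) else 0) :=
    Fintype.sum_prod_type_right
      (f := fun y => if ∀ i ∈ Iᶜ, (e.symm y) i = x i then p (e.symm y) else 0)
  rw [h2]
  have hcond : ∀ (b : ∀ i : {i // i ∈ I}, A i) (z : ∀ i : {i // ¬ i ∈ I}, A i),
      (∀ i ∈ Iᶜ, (e.symm (b, z)) i = x i) ↔ z = (e x).2 := by
    intro b z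
    constructor
    · intro hb
      funext j
      have := hb j.1 (Finset.mem_compl.mpr j.2)
      rw [show (e.symm (b, z)) j.1 = z j from by
        simp [he, Equiv.piEquivPiSubtypeProd, dif_neg j.2]] at this
      exact this
    · intro hb i hi
      have hni : ¬ i ∈ I := Finset.mem_compl.mp hi
      rw [show (e.symm (b, z)) i = z ⟨i, hni⟩ from by
        simp [he, Equiv.piEquivPiSubtypeProd, dif_neg hni], hb]
      simp [he, Equiv.piEquivPiSubtypeProd]
  rw [Finset.sum_eq_single ((e x).2)]
  · refine Finset.sum_congr rfl fun b _ => ?_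
    rw [if_pos ((hcond b _).mpr rfl)]
  · intro z _ hz
    refine Finset.sum_eq_zero fun b _ => if_neg fun hcon => hz ((hcond b z).mp hcon)
  · intro hx; exact absurd (Finset.mem_univ _) hx

end Transfer

section Entropy
variable {L : Type} [Fintype L] [DecidableEq L] {A : L → Type}
    [∀ i, Fintype (A i)] [∀ i, DecidableEq (A i)]

lemma split_entropy (p : (∀ i, A i) → ℝ) (hp0 : ∀ g, 0 ≤ p g)
    (hp1 : ∑ g : ∀ i, A i, p g = 1) (I : Finset L) :
    (∑ x : ∀ i, A i, (mrg p I x * mrg p Iᶜ x) * Real.log (mrg p I x * mrg p Iᶜ x)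
      ≤ ∑ x : ∀ i, A i, p x * Real.log (p x)) ∧
    ((∑ x : ∀ i, A i, (mrg p I x * mrg p Iᶜ x) * Real.log (mrg p I x * mrg p Iᶜ x)
      = ∑ x : ∀ i, A i, p x * Real.log (p x)) → ∀ x, p x = mrg p I x * mrg p Iᶜ x) := by
  set e := Equiv.piEquivPiSubtypeProd (fun i => i ∈ I) A with he
  set p' : ((∀ i : {i // i ∈ I}, A i) × (∀ i : {i // ¬ i ∈ I}, A i)) → ℝ :=
    fun y => p (e.symm y) with hp'
  have hp'0 : ∀ y, 0 ≤ p' y := fun y => hp0 _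
  have hp'1 : ∑ y, p' y = 1 := by rw [← hp1]; exact Equiv.sum_comp e.symm p
  set q' : ((∀ i : {i // i ∈ I}, A i) × (∀ i : {i // ¬ i ∈ I}, A i)) → ℝ :=
    fun y => (∑ z, p' (y.1, z)) * (∑ b, p' (b, y.2)) with hq'
  obtain ⟨hle, heqc⟩ := entropy_prod p' hp'0 hp'1 q' (fun y => rfl)
  have key : ∀ x, mrg p I x * mrg p Iᶜ x = q' (e x) := by
    intro x
    rw [mrg_transfer p I x, mrg_transfer_c p I x]
  have t1 : ∑ x : ∀ i, A i, (mrg p I x * mrg p Iᶜ x) * Real.log (mrg p I x * mrg p Iᶜ x)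
      = ∑ y, q' y * Real.log (q' y) := by
    rw [Finset.sum_congr rfl fun x (_ : x ∈ univ) => by rw [key x]]
    exact Equiv.sum_comp e (fun y => q' y * Real.log (q' y))
  have t2 : ∑ x : ∀ i, A i, p x * Real.log (p x) = ∑ y, p' y * Real.log (p' y) :=
    (Equiv.sum_comp e.symm (fun g => p g * Real.log (p g))).symm
  constructor
  · rw [t1, t2]; exact hle
  · intro hE
    rw [t1, t2] at hE
    have hpq := heqc hE
    intro x
    have h2 : p' (e x) = q' (e x) := by rw [hpq]
    rw [key x, ← h2]
    exact (congrArg p (e.symm_apply_apply x)).symm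
end Entropy

section Step2
variable {L : Type} [Fintype L] [DecidableEq L] {A : L → Type}
    [∀ i, Fintype (A i)] [∀ i, DecidableEq (A i)]

lemma sum_mrg_one (p : (∀ i, A i) → ℝ) (hp1 : ∑ g : ∀ i, A i, p g = 1) (I : Finset L) :
    ∑ x : ∀ i, A i, mrg p I x * mrg p Iᶜ x = 1 := by
  have h1 : ∀ x : ∀ i, A i, mrg p I x * mrg p Iᶜ x
      = ∑ g : ∀ i, A i, ∑ h : ∀ i, A i,
        (if ∀ i ∈ I, g i = x i then p g else 0) * (if ∀ i ∈ Iᶜ, h i = x i then p h else 0) :=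
    fun x => Finset.sum_mul_sum _ _ _ _
  rw [Finset.sum_congr rfl fun x (_ : x ∈ univ) => h1 x, Finset.sum_comm,
    Finset.sum_congr rfl fun g (_ : g ∈ univ) => Finset.sum_comm]
  have h2 : ∀ g h : ∀ i, A i, ∑ x : ∀ i, A i,
      (if ∀ i ∈ I, g i = x i then p g else 0) * (if ∀ i ∈ Iᶜ, h i = x i then p h else 0)
      = p g * p h := by
    intro g h
    rw [Finset.sum_eq_single (recomb I g h)]
    · have hre := (recomb_eq_iff I g h (recomb I g h)).mp rfl
      rw [if_pos hre.1, if_pos hre.2]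
    · intro x _ hx
      by_cases h1' : ∀ i ∈ I, g i = x i
      · by_cases h2' : ∀ i ∈ Iᶜ, h i = x i
        · exact absurd ((recomb_eq_iff I g h x).mpr ⟨h1', h2'⟩) hx
        · rw [if_neg h2', mul_zero]
      · rw [if_neg h1', zero_mul]
    · intro hm; exact absurd (Finset.mem_univ _) hm
  rw [Finset.sum_congr rfl fun g (_ : g ∈ univ) =>
    Finset.sum_congr rfl fun h (_ : h ∈ univ) => h2 g h]
  rw [show ∑ g : ∀ i, A i, ∑ h : ∀ i, A i, p g * p h
      = (∑ g : ∀ i, A i, p g) * (∑ h : ∀ i, A i, p h) from (Finset.sum_mul_sum _ _ _ _).symm,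
    hp1, mul_one]

lemma splits_of_pos (c : Finset L → ℝ) (hc : ∀ I, 0 ≤ c I) (p : (∀ i, A i) → ℝ)
    (hp0 : ∀ g, 0 ≤ p g) (hp1 : ∑ g : ∀ i, A i, p g = 1)
    (hid : ∀ x, (∑ I : Finset L, c I) * p x
      = ∑ I : Finset L, c I * (mrg p I x * mrg p Iᶜ x))
    (I0 : Finset L) (hI0 : 0 < c I0) : ∀ x, p x = mrg p I0 x * mrg p I0ᶜ x := by
  have hCpos : 0 < ∑ I : Finset L, c I :=
    lt_of_lt_of_le hI0 (Finset.single_le_sum (fun I _ => hc I) (mem_univ I0))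
  set C := ∑ I : Finset L, c I with hC
  set lam : Finset L → ℝ := fun I => c I / C with hlam
  have hlam0 : ∀ I, 0 ≤ lam I := fun I => div_nonneg (hc I) hCpos.le
  have hlam1 : ∑ I : Finset L, lam I = 1 := by
    simp only [hlam]
    rw [← Finset.sum_div, div_self (ne_of_gt hCpos)]
  have hpx : ∀ x, p x = ∑ I : Finset L, lam I * (mrg p I x * mrg p Iᶜ x) := by
    intro x
    have h2 : ∑ I : Finset L, lam I * (mrg p I x * mrg p Iᶜ x)
        = (∑ I : Finset L, c I * (mrg p I x * mrg p Iᶜ x)) / C := by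
      rw [Finset.sum_div]
      exact Finset.sum_congr rfl fun I _ => by simp only [hlam]; ring
    rw [h2, ← hid x, mul_comm, mul_div_assoc, div_self (ne_of_gt hCpos), mul_one]
  -- Jensen step
  have jensen' : ∀ x : ∀ i, A i,
      ∑ I : Finset L, lam I * Real.negMulLog (mrg p I x * mrg p Iᶜ x)
        ≤ Real.negMulLog (p x) := by
    intro x
    have hj := Real.concaveOn_negMulLog.le_map_sum (t := (univ : Finset (Finset L)))
      (w := lam) (p := fun I => mrg p I x * mrg p Iᶜ x)
      (fun I _ => hlam0 I) hlam1
      (fun I _ => Set.mem_Ici.mpr (mul_nonneg (mrg_nonneg hp0 I x) (mrg_nonneg hp0 Iᶜ x)))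
    simp only [smul_eq_mul] at hj
    rw [show ∑ I : Finset L, lam I * (mrg p I x * mrg p Iᶜ x) = p x from (hpx x).symm] at hj
    exact hj
  have hneg : ∀ r : (∀ i, A i) → ℝ,
      ∑ x : ∀ i, A i, Real.negMulLog (r x) = -∑ x : ∀ i, A i, r x * Real.log (r x) := by
    intro r
    rw [← Finset.sum_neg_distrib]
    exact Finset.sum_congr rfl fun x _ => by rw [Real.negMulLog_def]; ring
  have hsum_jensen : ∑ I : Finset L,
      lam I * ∑ x : ∀ i, A i, Real.negMulLog (mrg p I x * mrg p Iᶜ x)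
        ≤ ∑ x : ∀ i, A i, Real.negMulLog (p x) := by
    calc ∑ I : Finset L, lam I * ∑ x : ∀ i, A i, Real.negMulLog (mrg p I x * mrg p Iᶜ x)
        = ∑ I : Finset L, ∑ x : ∀ i, A i, lam I * Real.negMulLog (mrg p I x * mrg p Iᶜ x) :=
          Finset.sum_congr rfl fun I _ => Finset.mul_sum _ _ _
      _ = ∑ x : ∀ i, A i, ∑ I : Finset L, lam I * Real.negMulLog (mrg p I x * mrg p Iᶜ x) :=
          Finset.sum_comm
      _ ≤ ∑ x : ∀ i, A i, Real.negMulLog (p x) :=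
          Finset.sum_le_sum fun x _ => jensen' x
  -- abbreviations for entropies
  set Ep := ∑ x : ∀ i, A i, p x * Real.log (p x) with hEp
  set Eq : Finset L → ℝ :=
    fun I => ∑ x : ∀ i, A i, (mrg p I x * mrg p Iᶜ x) * Real.log (mrg p I x * mrg p Iᶜ x)
    with hEq
  have hEqP : ∀ I, Eq I ≤ Ep := fun I => (split_entropy p hp0 hp1 I).1
  have hEjen : Ep ≤ ∑ I : Finset L, lam I * Eq I := by
    have h1 : ∀ I : Finset L,
        ∑ x : ∀ i, A i, Real.negMulLog (mrg p I x * mrg p Iᶜ x) = -Eq I :=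
      fun I => hneg _
    have h2 : ∑ x : ∀ i, A i, Real.negMulLog (p x) = -Ep := hneg _
    rw [h2, Finset.sum_congr rfl fun I (_ : I ∈ univ) => by rw [h1 I]] at hsum_jensen
    have h3 : ∑ I : Finset L, lam I * -Eq I = -∑ I : Finset L, lam I * Eq I := by
      rw [← Finset.sum_neg_distrib]
      exact Finset.sum_congr rfl fun I _ => by ring
    rw [h3] at hsum_jensen
    linarith
  have hzero : ∑ I : Finset L, lam I * (Ep - Eq I) = 0 := by
    have hkk : ∑ I : Finset L, lam I * (Ep - Eq I)
        = Ep - ∑ I : Finset L, lam I * Eq I := by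
      rw [Finset.sum_congr rfl fun I (_ : I ∈ univ) =>
        (mul_sub (lam I) Ep (Eq I) : lam I * (Ep - Eq I) = lam I * Ep - lam I * Eq I),
        Finset.sum_sub_distrib, ← Finset.sum_mul, hlam1, one_mul]
    rw [hkk]
    have : ∑ I : Finset L, lam I * Eq I ≤ ∑ I : Finset L, lam I * Ep := by
      refine Finset.sum_le_sum fun I _ => mul_le_mul_of_nonneg_left (hEqP I) (hlam0 I)
    rw [← Finset.sum_mul, hlam1, one_mul] at this
    linarith
  have hterm : lam I0 * (Ep - Eq I0) = 0 := by
    have := (Finset.sum_eq_zero_iff_of_nonneg (fun I (_ : I ∈ univ) =>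
      mul_nonneg (hlam0 I) (by linarith [hEqP I]))).mp hzero I0 (mem_univ I0)
    exact this
  have hlamI0 : 0 < lam I0 := div_pos hI0 hCpos
  have hEqI0 : Eq I0 = Ep := by
    rcases mul_eq_zero.mp hterm with h | h
    · exact absurd h (ne_of_gt hlamI0)
    · linarith
  exact (split_entropy p hp0 hp1 I0).2 hEqI0

end Step2

/-- **Every equilibrium on the simplex is detailed-balancing.**
Under the standing assumption, every equilibrium `p ∈ S_𝓖` of the recombination dynamics
satisfies `p(g)·p(h) = p(g_I h_J)·p(g_J h_I)` for all gametes `g, h` and every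
recombination pattern `{I, J}` (here `J = Iᶜ`). -/
theorem equilibrium_is_detailed_balancing
    {L : Type} [Fintype L] [DecidableEq L] [Nonempty L]
    (A : L → Type) [∀ i, Fintype (A i)] [∀ i, DecidableEq (A i)]
    (hA : ∀ i, 2 ≤ Fintype.card (A i))
    (c : Finset L → ℝ) (hc : ∀ I, 0 ≤ c I) (hcsym : ∀ I, c I = c Iᶜ)
    (hsep : ∀ i j : L, i ≠ j →
      0 < ∑ I ∈ univ.filter (fun I : Finset L => i ∈ I ∧ j ∉ I), c I)
    (p : (∀ i, A i) → ℝ) (hp0 : ∀ g, 0 ≤ p g) (hp1 : ∑ g : ∀ i, A i, p g = 1)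
    (heq : recF c p = 0) :
    ∀ (g h : ∀ i, A i) (I : Finset L),
      p g * p h = p (recomb I g h) * p (recomb Iᶜ g h) := by
  classical
  have hid := equilibrium_identity c p hp1 heq
  have hpos_split : ∀ K : Finset L, 0 < c K → ∀ x, p x = mrg p K x * mrg p Kᶜ x :=
    fun K hK => splits_of_pos c hc p hp0 hp1 hid K hK
  have hsplit_univ : ∀ x, p x = mrg p (univ : Finset L) x * mrg p (univ : Finset L)ᶜ x := by
    intro x
    rw [mrg_univ, Finset.compl_univ, mrg_empty, hp1, mul_one]
  have hsplit_empty : ∀ x, p x = mrg p (∅ : Finset L) x * mrg p (∅ : Finset L)ᶜ x := by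
    intro x
    rw [mrg_empty, hp1, Finset.compl_empty, mrg_univ, one_mul]
  have hexist : ∀ i j : L, i ≠ j → ∃ S : Finset L, i ∈ S ∧ j ∉ S ∧ 0 < c S := by
    intro i j hij
    by_contra hcon
    push_neg at hcon
    have hzero : ∀ S ∈ univ.filter (fun I : Finset L => i ∈ I ∧ j ∉ I), c S = 0 := by
      intro S hS
      simp only [Finset.mem_filter] at hS
      exact le_antisymm (hcon S hS.2.1 hS.2.2) (hc S)
    have hpos := hsep i j hij
    rw [Finset.sum_eq_zero hzero] at hpos
    exact lt_irrefl 0 hpos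
  -- splits are closed under finite infima
  have hsplit_inf : ∀ (f : L → Finset L) (t : Finset L),
      (∀ j ∈ t, ∀ x, p x = mrg p (f j) x * mrg p (f j)ᶜ x) →
      ∀ x, p x = mrg p (t.inf f) x * mrg p (t.inf f)ᶜ x := by
    intro f t
    induction t using Finset.induction_on with
    | empty =>
      intro _ x
      rw [Finset.inf_empty]
      exact hsplit_univ x
    | @insert a s ha ih =>
      intro hall
      rw [Finset.inf_insert, Finset.inf_eq_inter]
      exact splits_inter p (f a) (s.inf f)
        (hall a (Finset.mem_insert_self a s))
        (ih (fun j hj => hall j (Finset.mem_insert_of_mem hj)))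
  -- splits are closed under union
  have hsplit_union : ∀ I J : Finset L,
      (∀ x, p x = mrg p I x * mrg p Iᶜ x) → (∀ x, p x = mrg p J x * mrg p Jᶜ x) →
      ∀ x, p x = mrg p (I ∪ J) x * mrg p (I ∪ J)ᶜ x := by
    intro I J hI hJ
    have h1 := splits_compl p (Iᶜ ∩ Jᶜ)
      (splits_inter p Iᶜ Jᶜ (splits_compl p I hI) (splits_compl p J hJ))
    have e : (Iᶜ ∩ Jᶜ)ᶜ = I ∪ J := by rw [Finset.compl_inter, compl_compl, compl_compl]
    rw [e] at h1
    exact h1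
  -- splits are closed under finite suprema
  have hsplit_sup : ∀ (f : L → Finset L) (t : Finset L),
      (∀ j ∈ t, ∀ x, p x = mrg p (f j) x * mrg p (f j)ᶜ x) →
      ∀ x, p x = mrg p (t.sup f) x * mrg p (t.sup f)ᶜ x := by
    intro f t
    induction t using Finset.induction_on with
    | empty =>
      intro _ x
      rw [Finset.sup_empty]
      exact hsplit_empty x
    | @insert a s ha ih =>
      intro hall
      rw [Finset.sup_insert, Finset.sup_eq_union]
      exact hsplit_union (f a) (s.sup f)
        (hall a (Finset.mem_insert_self a s))
        (ih (fun j hj => hall j (Finset.mem_insert_of_mem hj)))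
  -- every subset splits
  have hsplit_all : ∀ K : Finset L, ∀ x, p x = mrg p K x * mrg p Kᶜ x := by
    intro K
    set S : L → L → Finset L :=
      fun i j => if h : i ≠ j then (hexist i j h).choose else ∅ with hS
    set T : L → Finset L := fun i => (Kᶜ).inf (S i) with hT
    have hSprop : ∀ (i j : L) (h : i ≠ j), i ∈ S i j ∧ j ∉ S i j ∧ 0 < c (S i j) := by
      intro i j h
      simp only [hS, dif_pos h]
      exact (hexist i j h).choose_spec
    have hTsplit : ∀ i, ∀ x, p x = mrg p (T i) x * mrg p (T i)ᶜ x := by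
      intro i
      refine hsplit_inf (S i) Kᶜ (fun j hj x => ?_)
      by_cases h : i ≠ j
      · exact hpos_split (S i j) (hSprop i j h).2.2 x
      · push_neg at h
        subst h
        have hni : ¬ (i ≠ i) := fun hne => hne rfl
        simp only [hS, dif_neg hni]
        exact hsplit_empty x
    have hTK : ∀ i ∈ K, T i ⊆ K := by
      intro i hi j hj
      by_contra hjK
      have hjc : j ∈ Kᶜ := Finset.mem_compl.mpr hjK
      have hne : i ≠ j := fun hij => hjK (hij ▸ hi)
      have hsub : T i ⊆ S i j := Finset.inf_le hjc
      exact (hSprop i j hne).2.1 (hsub hj)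
    have hiT : ∀ i ∈ K, i ∈ T i := by
      intro i hi
      have : {i} ≤ (Kᶜ).inf (S i) := by
        refine Finset.le_inf fun j hj => ?_
        have hne : i ≠ j := fun hij => (Finset.mem_compl.mp (hij ▸ hj)) hi
        exact Finset.singleton_subset_iff.mpr (hSprop i j hne).1
      exact Finset.singleton_subset_iff.mp this
    have hKsup : K.sup T = K := by
      apply le_antisymm
      · exact Finset.sup_le fun i hi => hTK i hi
      · intro i hi
        exact Finset.le_sup (f := T) hi (hiT i hi)
    have := hsplit_sup T K (fun i _ => hTsplit i)
    rw [hKsup] at this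
    exact this
  -- conclusion
  intro g h I
  have c1 : ∀ i ∈ I, recomb I g h i = g i := fun i hi => by simp [recomb, hi]
  have c2 : ∀ i ∈ Iᶜ, recomb I g h i = h i := fun i hi => by
    simp [recomb, Finset.mem_compl.mp hi]
  have c3 : ∀ i ∈ I, recomb Iᶜ g h i = h i := fun i hi => by
    have : ¬ i ∈ Iᶜ := fun hcon => (Finset.mem_compl.mp hcon) hi
    simp [recomb, this]
  have c4 : ∀ i ∈ Iᶜ, recomb Iᶜ g h i = g i := fun i hi => by simp [recomb, hi]
  calc p g * p h
      = (mrg p I g * mrg p Iᶜ g) * (mrg p I h * mrg p Iᶜ h) := by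
        rw [← hsplit_all I g, ← hsplit_all I h]
    _ = (mrg p I g * mrg p Iᶜ h) * (mrg p I h * mrg p Iᶜ g) := by ring
    _ = p (recomb I g h) * p (recomb Iᶜ g h) := by
        rw [hsplit_all I (recomb I g h), hsplit_all I (recomb Iᶜ g h),
          mrg_congr p I c1, mrg_congr p Iᶜ c2, mrg_congr p I c3, mrg_congr p Iᶜ c4]
end
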